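/- arXiv:2309.05903 — 6 statements merged into one kernel-verified Lean document; each statement's English description precedes it below -/
import Mathlib

section
/- Fix an integer k ≥ 1 and define the polynomial W(n,k)(x) = Σ_{m=0}^{k} w(n,k,m) x^m, where w(n,k,m) = (1/k)*C(n,k-1)*C(n-k-1,m-1)*C(k,m) for 0 < m ≤ k and k+m ≤ n, w(n,k,0) = 1 if n = k, and w(n,k,m) = 0 otherwise. Then for all n ≥ k - 1, (n-k+2)^2 (n-k+3) * W(n+2,k)(x) = (n+2)(n-k+2) * (2(n-k+1) - (n-2k+1)x) * W(n+1,k)(x) + (n+1)(n+2)(n-k)(x-1) * W(n,k)(x). -/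
noncomputable def w (n k m : ℤ) : ℚ :=
  if 0 < m ∧ m ≤ k ∧ k + m ≤ n then
    (1 / (k : ℚ)) * (n.toNat.choose (k - 1).toNat : ℚ) *
      ((n - k - 1).toNat.choose (m - 1).toNat : ℚ) * (k.toNat.choose m.toNat : ℚ)
  else if m = 0 ∧ n = k then 1 else 0

open Polynomial

noncomputable def W (n k : ℤ) : Polynomial ℚ :=
  ∑ m ∈ Finset.range (k.toNat + 1), Polynomial.C (w n k m) * X ^ m

lemma w_eq_zero_of_gt {n k m : ℤ} (hk : 1 ≤ k) (hm : k < m) : w n k m = 0 := by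
  unfold w
  rw [if_neg (by omega), if_neg (by omega)]

lemma w_eq_zero_of_nonpos {n k m : ℤ} (hm : m < 0) : w n k m = 0 := by
  unfold w
  rw [if_neg (by omega), if_neg (by omega)]

lemma coeff_W (n k : ℤ) (hk : 1 ≤ k) (m : ℕ) : (W n k).coeff m = w n k m := by
  unfold W
  rw [Polynomial.finset_sum_coeff]
  simp only [Polynomial.coeff_C_mul, Polynomial.coeff_X_pow, mul_ite, mul_one, mul_zero]
  rw [Finset.sum_ite_eq (Finset.range (k.toNat + 1)) m (fun m' => w n k m')]
  by_cases h : m ∈ Finset.range (k.toNat + 1)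
  · rw [if_pos h]
  · rw [if_neg h]
    simp only [Finset.mem_range, not_lt] at h
    exact (w_eq_zero_of_gt hk (by omega)).symm


lemma w_pos {n k m : ℤ} (h1 : 0 < m) (h2 : m ≤ k) (h3 : k + m ≤ n) :
    w n k m = (1 / (k : ℚ)) * (n.toNat.choose (k - 1).toNat : ℚ) *
      ((n - k - 1).toNat.choose (m - 1).toNat : ℚ) * (k.toNat.choose m.toNat : ℚ) := by
  unfold w; rw [if_pos ⟨h1, h2, h3⟩]

lemma w_zero {n k m : ℤ} (h : ¬(0 < m ∧ m ≤ k ∧ k + m ≤ n)) (h' : ¬(m = 0 ∧ n = k)) :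
    w n k m = 0 := by
  unfold w; rw [if_neg h, if_neg h']

lemma w_diag {n k : ℤ} (h : n = k) : w n k 0 = 1 := by
  unfold w; rw [if_neg (by omega), if_pos ⟨rfl, h⟩]

lemma fne (a : ℕ) : (a.factorial : ℚ) ≠ 0 := by
  exact_mod_cast a.factorial_ne_zero


lemma chooseQ1 (N r : ℕ) : ((N:ℚ) + 1 - r) * (((N+1).choose r : ℕ) : ℚ) = ((N:ℚ) + 1) * ((N.choose r : ℕ) : ℚ) := by
  rcases le_or_gt r (N+1) with h | h
  · have hc := congrArg (fun x : ℕ => (x : ℚ)) (Nat.choose_mul_succ_eq N r)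
    beta_reduce at hc
    push_cast [h] at hc
    linear_combination -hc
  · rw [Nat.choose_eq_zero_of_lt h, Nat.choose_eq_zero_of_lt (by omega)]
    norm_num

lemma chooseQ2 (N r : ℕ) : ((r:ℚ) + 1) * ((N.choose (r+1) : ℕ) : ℚ) = ((N:ℚ) - r) * ((N.choose r : ℕ) : ℚ) := by
  rcases le_or_gt r N with h | h
  · have hc := congrArg (fun x : ℕ => (x : ℚ)) (Nat.choose_succ_right_eq N r)
    beta_reduce at hc
    push_cast [h] at hc
    linear_combination hc
  · rw [Nat.choose_eq_zero_of_lt (by omega), Nat.choose_eq_zero_of_lt h]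
    norm_num

set_option maxHeartbeats 4000000 in
/-- The scalar (coefficient-wise) form of the recurrence. -/
lemma scalar (n k : ℤ) (hk : 1 ≤ k) (hn : k - 1 ≤ n) (m : ℤ) :
    ((n : ℚ) - k + 2) ^ 2 * ((n : ℚ) - k + 3) * w (n + 2) k m =
      ((n : ℚ) + 2) * ((n : ℚ) - k + 2) *
        (2 * ((n : ℚ) - k + 1) * w (n + 1) k m - ((n : ℚ) - 2 * k + 1) * w (n + 1) k (m - 1))
      + ((n : ℚ) + 1) * ((n : ℚ) + 2) * ((n : ℚ) - k) * (w n k (m - 1) - w n k m) := by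
  rcases show m < 0 ∨ m = 0 ∨ (1 ≤ m ∧ m ≤ k) ∨ m = k + 1 ∨ k + 2 ≤ m from by omega with
    hm | hm | ⟨hm1, hm2⟩ | hm | hm
  · -- m < 0 : everything vanishes
    simp only [w_eq_zero_of_nonpos hm, w_eq_zero_of_nonpos (show m - 1 < 0 by omega)]
    ring
  · -- m = 0
    subst hm
    rw [show (0:ℤ) - 1 = -1 from by norm_num]
    rw [w_zero (n := n + 2) (by omega) (by omega),
        w_eq_zero_of_nonpos (n := n + 1) (show (-1:ℤ) < 0 by norm_num),
        w_eq_zero_of_nonpos (n := n) (show (-1:ℤ) < 0 by norm_num)]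
    rcases show n = k - 1 ∨ n = k ∨ k + 1 ≤ n from by omega with hc | hc | hc
    · rw [w_diag (by omega), w_zero (n := n) (by omega) (by omega)]
      rw [show (n:ℚ) = (k:ℚ) - 1 from by exact_mod_cast congrArg (fun x : ℤ => (x : ℚ)) hc]
      ring
    · rw [w_diag hc, w_zero (n := n + 1) (by omega) (by omega)]
      rw [show (n:ℚ) = (k:ℚ) from by exact_mod_cast congrArg (fun x : ℤ => (x : ℚ)) hc]
      ring
    · rw [w_zero (n := n + 1) (by omega) (by omega), w_zero (n := n) (by omega) (by omega)]
      ring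
  · -- 1 ≤ m ≤ k : the main cases
    rcases show (m = 1 ∧ n = k - 1) ∨ (m = 1 ∧ n = k) ∨ (m = 1 ∧ k + 1 ≤ n) ∨
        (2 ≤ m ∧ n ≤ k + m - 3) ∨ (2 ≤ m ∧ n = k + m - 2) ∨ (2 ≤ m ∧ n = k + m - 1) ∨
        (2 ≤ m ∧ k + m ≤ n) from by omega with
      ⟨h1, h2⟩ | ⟨h1, h2⟩ | ⟨h1, h2⟩ | ⟨h1, h2⟩ | ⟨h1, h2⟩ | ⟨h1, h2⟩ | ⟨h1, h2⟩
    · -- m = 1, n = k - 1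
      subst h1
      rw [show (1:ℤ) - 1 = 0 from by norm_num]
      obtain ⟨K, hK⟩ : ∃ K : ℕ, k = (K:ℤ) + 1 := ⟨(k-1).toNat, by omega⟩
      rw [w_pos (n := n+2) (k := k) (m := 1) (by norm_num) (by omega) (by omega),
          w_zero (n := n+1) (k := k) (m := 1) (by omega) (by omega),
          w_zero (n := n) (k := k) (m := 1) (by omega) (by omega),
          w_diag (show n + 1 = k from by omega),
          w_zero (n := n) (k := k) (m := 0) (by omega) (by omega)]
      rw [show (n+2).toNat = K+2 from by omega,
          show (k-1).toNat = K from by omega,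
          show (n+2-k-1).toNat = 0 from by omega,
          show ((1:ℤ)-1).toNat = 0 from by norm_num,
          show k.toNat = K+1 from by omega,
          show (1:ℤ).toNat = 1 from rfl]
      simp only [Nat.choose_zero_right, Nat.choose_one_right]
      rw [Nat.cast_choose ℚ (show K ≤ K+2 by omega)]
      rw [show K+2-K = 2 from by omega, show K+2 = K+1+1 from by omega,
          show Nat.factorial 2 = 2 from rfl]
      simp only [Nat.factorial_succ]
      push_cast
      rw [show (n:ℚ) = (K:ℚ) from by exact_mod_cast congrArg (fun x : ℤ => (x : ℚ)) (show n = (K:ℤ) from by omega),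
          show (k:ℚ) = (K:ℚ)+1 from by exact_mod_cast congrArg (fun x : ℤ => (x : ℚ)) hK]
      field_simp [fne K]
      ring
    · -- m = 1, n = k
      subst h1
      rw [show (1:ℤ) - 1 = 0 from by norm_num]
      obtain ⟨K, hK⟩ : ∃ K : ℕ, k = (K:ℤ) + 1 := ⟨(k-1).toNat, by omega⟩
      rw [w_pos (n := n+2) (k := k) (m := 1) (by norm_num) (by omega) (by omega),
          w_pos (n := n+1) (k := k) (m := 1) (by norm_num) (by omega) (by omega),
          w_zero (n := n) (k := k) (m := 1) (by omega) (by omega),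
          w_zero (n := n+1) (k := k) (m := 0) (by omega) (by omega),
          w_diag (show n = k from h2)]
      rw [show (n+2).toNat = K+3 from by omega,
          show (n+1).toNat = K+2 from by omega,
          show (k-1).toNat = K from by omega,
          show (n+2-k-1).toNat = 1 from by omega,
          show (n+1-k-1).toNat = 0 from by omega,
          show ((1:ℤ)-1).toNat = 0 from by norm_num,
          show k.toNat = K+1 from by omega,
          show (1:ℤ).toNat = 1 from rfl]
      simp only [Nat.choose_zero_right, Nat.choose_one_right]
      rw [Nat.cast_choose ℚ (show K ≤ K+3 by omega),
          Nat.cast_choose ℚ (show K ≤ K+2 by omega)]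
      rw [show K+3-K = 3 from by omega, show K+2-K = 2 from by omega,
          show K+3 = K+1+1+1 from by omega, show K+2 = K+1+1 from by omega,
          show Nat.factorial 3 = 6 from rfl, show Nat.factorial 2 = 2 from rfl]
      simp only [Nat.factorial_succ]
      push_cast
      rw [show (n:ℚ) = (K:ℚ)+1 from by exact_mod_cast congrArg (fun x : ℤ => (x : ℚ)) (show n = (K:ℤ)+1 from by omega),
          show (k:ℚ) = (K:ℚ)+1 from by exact_mod_cast congrArg (fun x : ℤ => (x : ℚ)) hK]
      field_simp [fne K]
      ring
    · -- m = 1, k + 1 ≤ n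
      subst h1
      rw [show (1:ℤ) - 1 = 0 from by norm_num]
      obtain ⟨K, hK⟩ : ∃ K : ℕ, k = (K:ℤ) + 1 := ⟨(k-1).toNat, by omega⟩
      obtain ⟨d, hd⟩ : ∃ d : ℕ, n = (K:ℤ) + (d:ℤ) + 2 := ⟨(n - K - 2).toNat, by omega⟩
      rw [w_pos (n := n+2) (k := k) (m := 1) (by norm_num) (by omega) (by omega),
          w_pos (n := n+1) (k := k) (m := 1) (by norm_num) (by omega) (by omega),
          w_pos (n := n) (k := k) (m := 1) (by norm_num) (by omega) (by omega),
          w_zero (n := n+1) (k := k) (m := 0) (by omega) (by omega),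
          w_zero (n := n) (k := k) (m := 0) (by omega) (by omega)]
      rw [show (n+2).toNat = K+d+4 from by omega,
          show (n+1).toNat = K+d+3 from by omega,
          show n.toNat = K+d+2 from by omega,
          show (k-1).toNat = K from by omega,
          show (n+2-k-1).toNat = d+2 from by omega,
          show (n+1-k-1).toNat = d+1 from by omega,
          show (n-k-1).toNat = d from by omega,
          show ((1:ℤ)-1).toNat = 0 from by norm_num,
          show k.toNat = K+1 from by omega,
          show (1:ℤ).toNat = 1 from rfl]
      simp only [Nat.choose_zero_right, Nat.choose_one_right]
      rw [Nat.cast_choose ℚ (show K ≤ K+d+4 by omega),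
          Nat.cast_choose ℚ (show K ≤ K+d+3 by omega),
          Nat.cast_choose ℚ (show K ≤ K+d+2 by omega)]
      rw [show K+d+4-K = d+4 from by omega, show K+d+3-K = d+3 from by omega,
          show K+d+2-K = d+2 from by omega]
      rw [show K+d+4 = K+d+2+1+1 from by omega, show K+d+3 = K+d+2+1 from by omega,
          show d+4 = d+1+1+1+1 from by omega, show d+3 = d+1+1+1 from by omega,
          show d+2 = d+1+1 from by omega]
      simp only [Nat.factorial_succ]
      push_cast
      rw [show (n:ℚ) = (K:ℚ)+(d:ℚ)+2 from by exact_mod_cast congrArg (fun x : ℤ => (x : ℚ)) hd,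
          show (k:ℚ) = (K:ℚ)+1 from by exact_mod_cast congrArg (fun x : ℤ => (x : ℚ)) hK]
      field_simp [fne (K+d+2), fne K, fne d]
      ring
    · -- 2 ≤ m, n ≤ k + m - 3 : everything vanishes
      rw [w_zero (n := n+2) (k := k) (m := m) (by omega) (by omega),
          w_zero (n := n+1) (k := k) (m := m) (by omega) (by omega),
          w_zero (n := n) (k := k) (m := m) (by omega) (by omega),
          w_zero (n := n+1) (k := k) (m := m-1) (by omega) (by omega),
          w_zero (n := n) (k := k) (m := m-1) (by omega) (by omega)]
      ring
    · -- 2 ≤ m, n = k + m - 2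
      obtain ⟨M, hM⟩ : ∃ M : ℕ, m = (M:ℤ) + 2 := ⟨(m-2).toNat, by omega⟩
      obtain ⟨j, hj⟩ : ∃ j : ℕ, k = (M:ℤ) + (j:ℤ) + 2 := ⟨(k-m).toNat, by omega⟩
      have hn2 : n = 2*(M:ℤ) + (j:ℤ) + 2 := by omega
      rw [w_pos (n := n+2) (k := k) (m := m) (by omega) (by omega) (by omega),
          w_zero (n := n+1) (k := k) (m := m) (by omega) (by omega),
          w_zero (n := n) (k := k) (m := m) (by omega) (by omega),
          w_pos (n := n+1) (k := k) (m := m-1) (by omega) (by omega) (by omega),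
          w_zero (n := n) (k := k) (m := m-1) (by omega) (by omega)]
      rw [show (n+2).toNat = 2*M+j+4 from by omega,
          show (n+1).toNat = 2*M+j+3 from by omega,
          show (k-1).toNat = M+j+1 from by omega,
          show (n+2-k-1).toNat = M+1 from by omega,
          show (n+1-k-1).toNat = M from by omega,
          show (m-1).toNat = M+1 from by omega,
          show (m-1-1).toNat = M from by omega,
          show k.toNat = M+j+2 from by omega,
          show m.toNat = M+2 from by omega]
      simp only [Nat.choose_self]
      rw [Nat.cast_choose ℚ (show M+j+1 ≤ 2*M+j+4 by omega),
          Nat.cast_choose ℚ (show M+j+1 ≤ 2*M+j+3 by omega),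
          Nat.cast_choose ℚ (show M+2 ≤ M+j+2 by omega),
          Nat.cast_choose ℚ (show M+1 ≤ M+j+2 by omega)]
      rw [show 2*M+j+4-(M+j+1) = M+3 from by omega,
          show 2*M+j+3-(M+j+1) = M+2 from by omega,
          show M+j+2-(M+2) = j from by omega,
          show M+j+2-(M+1) = j+1 from by omega]
      rw [show 2*M+j+4 = 2*M+j+3+1 from by omega,
          show M+j+2 = M+j+1+1 from by omega,
          show M+3 = M+1+1+1 from by omega,
          show M+2 = M+1+1 from by omega]
      simp only [Nat.factorial_succ]
      push_cast
      rw [show (n:ℚ) = 2*(M:ℚ)+(j:ℚ)+2 from by exact_mod_cast congrArg (fun x : ℤ => (x : ℚ)) hn2,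
          show (k:ℚ) = (M:ℚ)+(j:ℚ)+2 from by exact_mod_cast congrArg (fun x : ℤ => (x : ℚ)) hj]
      field_simp [fne (2*M+j+3), fne (M+j), fne M, fne j]
      ring
    · -- 2 ≤ m, n = k + m - 1
      obtain ⟨M, hM⟩ : ∃ M : ℕ, m = (M:ℤ) + 2 := ⟨(m-2).toNat, by omega⟩
      obtain ⟨j, hj⟩ : ∃ j : ℕ, k = (M:ℤ) + (j:ℤ) + 2 := ⟨(k-m).toNat, by omega⟩
      have hn2 : n = 2*(M:ℤ) + (j:ℤ) + 3 := by omega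
      rw [w_pos (n := n+2) (k := k) (m := m) (by omega) (by omega) (by omega),
          w_pos (n := n+1) (k := k) (m := m) (by omega) (by omega) (by omega),
          w_zero (n := n) (k := k) (m := m) (by omega) (by omega),
          w_pos (n := n+1) (k := k) (m := m-1) (by omega) (by omega) (by omega),
          w_pos (n := n) (k := k) (m := m-1) (by omega) (by omega) (by omega)]
      rw [show (n+2).toNat = 2*M+j+5 from by omega,
          show (n+1).toNat = 2*M+j+4 from by omega,
          show n.toNat = 2*M+j+3 from by omega,
          show (k-1).toNat = M+j+1 from by omega,
          show (n+2-k-1).toNat = M+2 from by omega,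
          show (n+1-k-1).toNat = M+1 from by omega,
          show (n-k-1).toNat = M from by omega,
          show (m-1).toNat = M+1 from by omega,
          show (m-1-1).toNat = M from by omega,
          show k.toNat = M+j+2 from by omega,
          show m.toNat = M+2 from by omega]
      simp only [Nat.choose_self]
      rw [Nat.cast_choose ℚ (show M+j+1 ≤ 2*M+j+5 by omega),
          Nat.cast_choose ℚ (show M+1 ≤ M+2 by omega),
          Nat.cast_choose ℚ (show M+2 ≤ M+j+2 by omega),
          Nat.cast_choose ℚ (show M+j+1 ≤ 2*M+j+4 by omega),
          Nat.cast_choose ℚ (show M ≤ M+1 by omega),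
          Nat.cast_choose ℚ (show M+j+1 ≤ 2*M+j+3 by omega),
          Nat.cast_choose ℚ (show M+1 ≤ M+j+2 by omega)]
      rw [show 2*M+j+5-(M+j+1) = M+4 from by omega,
          show 2*M+j+4-(M+j+1) = M+3 from by omega,
          show 2*M+j+3-(M+j+1) = M+2 from by omega,
          show M+2-(M+1) = 1 from by omega,
          show M+1-M = 1 from by omega,
          show M+j+2-(M+2) = j from by omega,
          show M+j+2-(M+1) = j+1 from by omega]
      rw [show 2*M+j+5 = 2*M+j+3+1+1 from by omega,
          show 2*M+j+4 = 2*M+j+3+1 from by omega,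
          show M+j+2 = M+j+1+1 from by omega,
          show M+4 = M+1+1+1+1 from by omega,
          show M+3 = M+1+1+1 from by omega,
          show M+2 = M+1+1 from by omega]
      simp only [Nat.factorial_succ, Nat.factorial_one]
      push_cast
      rw [show (n:ℚ) = 2*(M:ℚ)+(j:ℚ)+3 from by exact_mod_cast congrArg (fun x : ℤ => (x : ℚ)) hn2,
          show (k:ℚ) = (M:ℚ)+(j:ℚ)+2 from by exact_mod_cast congrArg (fun x : ℤ => (x : ℚ)) hj]
      field_simp [fne (2*M+j+3), fne (M+j), fne M, fne j]
      ring
    · -- 2 ≤ m, k + m ≤ n : fully generic case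
      obtain ⟨M, hM⟩ : ∃ M : ℕ, m = (M:ℤ) + 2 := ⟨(m-2).toNat, by omega⟩
      obtain ⟨j, hj⟩ : ∃ j : ℕ, k = (M:ℤ) + (j:ℤ) + 2 := ⟨(k-m).toNat, by omega⟩
      obtain ⟨d, hd⟩ : ∃ d : ℕ, n = 2*(M:ℤ) + (j:ℤ) + (d:ℤ) + 4 := ⟨(n-k-m).toNat, by omega⟩
      have hkQ : (k:ℚ) = (M:ℚ)+(j:ℚ)+2 := by exact_mod_cast congrArg (fun x : ℤ => (x : ℚ)) hj
      have hnQ : (n:ℚ) = 2*(M:ℚ)+(j:ℚ)+(d:ℚ)+4 := by exact_mod_cast congrArg (fun x : ℤ => (x : ℚ)) hd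
      have R1 : ((M:ℚ)+(d:ℚ)+4)*((d:ℚ)+1) * w (n+1) k m = (2*(M:ℚ)+(j:ℚ)+(d:ℚ)+5)*((M:ℚ)+(d:ℚ)+2) * w n k m := by
        rw [w_pos (n := n+1) (k := k) (m := m) (by omega) (by omega) (by omega),
            w_pos (n := n) (k := k) (m := m) (by omega) (by omega) (by omega)]
        rw [show (n+1).toNat = 2*M+j+d+5 from by omega, show n.toNat = 2*M+j+d+4 from by omega,
            show (k-1).toNat = M+j+1 from by omega, show (n+1-k-1).toNat = M+d+2 from by omega,
            show (n-k-1).toNat = M+d+1 from by omega, show (m-1).toNat = M+1 from by omega,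
            show k.toNat = M+j+2 from by omega, show m.toNat = M+2 from by omega]
        rw [show 2*M+j+d+5 = 2*M+j+d+4+1 from by omega, show M+d+2 = M+d+1+1 from by omega]
        have h1 := chooseQ1 (2*M+j+d+4) (M+j+1)
        have h2 := chooseQ1 (M+d+1) (M+1)
        push_cast at h1 h2 ⊢
        linear_combination (((d:ℚ)+1) * (((M+d+1+1).choose (M+1) : ℕ) : ℚ) * (((M+j+2).choose (M+2) : ℕ) : ℚ) / (k:ℚ)) * h1
          + ((2*(M:ℚ)+(j:ℚ)+(d:ℚ)+5) * (((2*M+j+d+4).choose (M+j+1) : ℕ) : ℚ) * (((M+j+2).choose (M+2) : ℕ) : ℚ) / (k:ℚ)) * h2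
      have R2 : ((M:ℚ)+(d:ℚ)+5)*((d:ℚ)+2) * w (n+2) k m = (2*(M:ℚ)+(j:ℚ)+(d:ℚ)+6)*((M:ℚ)+(d:ℚ)+3) * w (n+1) k m := by
        rw [w_pos (n := n+2) (k := k) (m := m) (by omega) (by omega) (by omega),
            w_pos (n := n+1) (k := k) (m := m) (by omega) (by omega) (by omega)]
        rw [show (n+2).toNat = 2*M+j+d+6 from by omega, show (n+1).toNat = 2*M+j+d+5 from by omega,
            show (k-1).toNat = M+j+1 from by omega, show (n+2-k-1).toNat = M+d+3 from by omega,
            show (n+1-k-1).toNat = M+d+2 from by omega, show (m-1).toNat = M+1 from by omega,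
            show k.toNat = M+j+2 from by omega, show m.toNat = M+2 from by omega]
        rw [show 2*M+j+d+6 = 2*M+j+d+5+1 from by omega, show M+d+3 = M+d+2+1 from by omega]
        have h1 := chooseQ1 (2*M+j+d+5) (M+j+1)
        have h2 := chooseQ1 (M+d+2) (M+1)
        push_cast at h1 h2 ⊢
        linear_combination (((d:ℚ)+2) * (((M+d+2+1).choose (M+1) : ℕ) : ℚ) * (((M+j+2).choose (M+2) : ℕ) : ℚ) / (k:ℚ)) * h1
          + ((2*(M:ℚ)+(j:ℚ)+(d:ℚ)+6) * (((2*M+j+d+5).choose (M+j+1) : ℕ) : ℚ) * (((M+j+2).choose (M+2) : ℕ) : ℚ) / (k:ℚ)) * h2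
      have R3 : ((d:ℚ)+1)*((j:ℚ)+1) * w n k (m-1) = ((M:ℚ)+1)*((M:ℚ)+2) * w n k m := by
        rw [w_pos (n := n) (k := k) (m := m-1) (by omega) (by omega) (by omega),
            w_pos (n := n) (k := k) (m := m) (by omega) (by omega) (by omega)]
        rw [show n.toNat = 2*M+j+d+4 from by omega, show (k-1).toNat = M+j+1 from by omega,
            show (n-k-1).toNat = M+d+1 from by omega, show (m-1-1).toNat = M from by omega,
            show (m-1).toNat = M+1 from by omega, show k.toNat = M+j+2 from by omega,
            show m.toNat = M+2 from by omega]
        rw [show M+2 = M+1+1 from by omega]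
        have h1 := chooseQ2 (M+d+1) M
        have h2 := chooseQ2 (M+j+2) (M+1)
        push_cast at h1 h2 ⊢
        linear_combination (-((j:ℚ)+1) * (((2*M+j+d+4).choose (M+j+1) : ℕ) : ℚ) * (((M+j+2).choose (M+1) : ℕ) : ℚ) / (k:ℚ)) * h1
          + (-((M:ℚ)+1) * (((M+d+1).choose (M+1) : ℕ) : ℚ) * (((2*M+j+d+4).choose (M+j+1) : ℕ) : ℚ) / (k:ℚ)) * h2
      have R4 : ((d:ℚ)+2)*((j:ℚ)+1) * w (n+1) k (m-1) = ((M:ℚ)+1)*((M:ℚ)+2) * w (n+1) k m := by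
        rw [w_pos (n := n+1) (k := k) (m := m-1) (by omega) (by omega) (by omega),
            w_pos (n := n+1) (k := k) (m := m) (by omega) (by omega) (by omega)]
        rw [show (n+1).toNat = 2*M+j+d+5 from by omega, show (k-1).toNat = M+j+1 from by omega,
            show (n+1-k-1).toNat = M+d+2 from by omega, show (m-1-1).toNat = M from by omega,
            show (m-1).toNat = M+1 from by omega, show k.toNat = M+j+2 from by omega,
            show m.toNat = M+2 from by omega]
        rw [show M+2 = M+1+1 from by omega]
        have h1 := chooseQ2 (M+d+2) M
        have h2 := chooseQ2 (M+j+2) (M+1)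
        push_cast at h1 h2 ⊢
        linear_combination (-((j:ℚ)+1) * (((2*M+j+d+5).choose (M+j+1) : ℕ) : ℚ) * (((M+j+2).choose (M+1) : ℕ) : ℚ) / (k:ℚ)) * h1
          + (-((M:ℚ)+1) * (((M+d+2).choose (M+1) : ℕ) : ℚ) * (((2*M+j+d+5).choose (M+j+1) : ℕ) : ℚ) / (k:ℚ)) * h2
      refine mul_left_cancel₀ (show (((M:ℚ)+(d:ℚ)+5)*((M:ℚ)+(d:ℚ)+4)*((d:ℚ)+2)*((d:ℚ)+1)*((j:ℚ)+1)) ≠ 0 from by positivity) ?_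
      rw [hnQ, hkQ]
      linear_combination (320 + 624*(d:ℚ) + 412*(d:ℚ)^2 + 125*(d:ℚ)^3 + 18*(d:ℚ)^4 + (d:ℚ)^5 + 320*(j:ℚ) + 624*(j:ℚ)*(d:ℚ) + 412*(j:ℚ)*(d:ℚ)^2 + 125*(j:ℚ)*(d:ℚ)^3 + 18*(j:ℚ)*(d:ℚ)^4 + (j:ℚ)*(d:ℚ)^5 + 304*(M:ℚ) + 520*(M:ℚ)*(d:ℚ) + 267*(M:ℚ)*(d:ℚ)^2 + 55*(M:ℚ)*(d:ℚ)^3 + 4*(M:ℚ)*(d:ℚ)^4 + 304*(M:ℚ)*(j:ℚ) + 520*(M:ℚ)*(j:ℚ)*(d:ℚ) + 267*(M:ℚ)*(j:ℚ)*(d:ℚ)^2 + 55*(M:ℚ)*(j:ℚ)*(d:ℚ)^3 + 4*(M:ℚ)*(j:ℚ)*(d:ℚ)^4 + 108*(M:ℚ)^2 + 159*(M:ℚ)^2*(d:ℚ) + 57*(M:ℚ)^2*(d:ℚ)^2 + 6*(M:ℚ)^2*(d:ℚ)^3 + 108*(M:ℚ)^2*(j:ℚ) + 159*(M:ℚ)^2*(j:ℚ)*(d:ℚ)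 + 57*(M:ℚ)^2*(j:ℚ)*(d:ℚ)^2 + 6*(M:ℚ)^2*(j:ℚ)*(d:ℚ)^3 + 17*(M:ℚ)^3 + 21*(M:ℚ)^3*(d:ℚ) + 4*(M:ℚ)^3*(d:ℚ)^2 + 17*(M:ℚ)^3*(j:ℚ) + 21*(M:ℚ)^3*(j:ℚ)*(d:ℚ) + 4*(M:ℚ)^3*(j:ℚ)*(d:ℚ)^2 + (M:ℚ)^4 + (M:ℚ)^4*(d:ℚ) + (M:ℚ)^4*(j:ℚ) + (M:ℚ)^4*(j:ℚ)*(d:ℚ)) * R2 + (480 + 1376*(d:ℚ) + 1446*(d:ℚ)^2 + 703*(d:ℚ)^3 + 173*(d:ℚ)^4 + 21*(d:ℚ)^5 + (d:ℚ)^6 + -400*(j:ℚ) + -680*(j:ℚ)*(d:ℚ) + -345*(j:ℚ)*(d:ℚ)^2 + -70*(j:ℚ)*(d:ℚ)^3 + -5*(j:ℚ)*(d:ℚ)^4 + -80*(j:ℚ)^2 + -136*(j:ℚ)^2*(d:ℚ) + -69*(j:ℚ)^2*(d:ℚ)^2 + -14*(j:ℚ)^2*(d:ℚ)^3 + -1*(j:ℚ)^2*(d:ℚ)^4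 + 496*(M:ℚ) + 1316*(M:ℚ)*(d:ℚ) + 1214*(M:ℚ)*(d:ℚ)^2 + 469*(M:ℚ)*(d:ℚ)^3 + 80*(M:ℚ)*(d:ℚ)^4 + 5*(M:ℚ)*(d:ℚ)^5 + -440*(M:ℚ)*(j:ℚ) + -682*(M:ℚ)*(j:ℚ)*(d:ℚ) + -283*(M:ℚ)*(j:ℚ)*(d:ℚ)^2 + -43*(M:ℚ)*(j:ℚ)*(d:ℚ)^3 + -2*(M:ℚ)*(j:ℚ)*(d:ℚ)^4 + -56*(M:ℚ)*(j:ℚ)^2 + -82*(M:ℚ)*(j:ℚ)^2*(d:ℚ) + -29*(M:ℚ)*(j:ℚ)^2*(d:ℚ)^2 + -3*(M:ℚ)*(j:ℚ)^2*(d:ℚ)^3 + 190*(M:ℚ)^2 + 463*(M:ℚ)^2*(d:ℚ) + 365*(M:ℚ)^2*(d:ℚ)^2 + 101*(M:ℚ)^2*(d:ℚ)^3 + 9*(M:ℚ)^2*(d:ℚ)^4 + -177*(M:ℚ)^2*(j:ℚ) + -244*(M:ℚ)^2*(j:ℚ)*(d:ℚ) + -73*(M:ℚ)^2*(j:ℚ)*(d:ℚ)^2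 + -6*(M:ℚ)^2*(j:ℚ)*(d:ℚ)^3 + -13*(M:ℚ)^2*(j:ℚ)^2 + -16*(M:ℚ)^2*(j:ℚ)^2*(d:ℚ) + -3*(M:ℚ)^2*(j:ℚ)^2*(d:ℚ)^2 + 32*(M:ℚ)^3 + 71*(M:ℚ)^3*(d:ℚ) + 46*(M:ℚ)^3*(d:ℚ)^2 + 7*(M:ℚ)^3*(d:ℚ)^3 + -31*(M:ℚ)^3*(j:ℚ) + -37*(M:ℚ)^3*(j:ℚ)*(d:ℚ) + -6*(M:ℚ)^3*(j:ℚ)*(d:ℚ)^2 + -1*(M:ℚ)^3*(j:ℚ)^2 + -1*(M:ℚ)^3*(j:ℚ)^2*(d:ℚ) + 2*(M:ℚ)^4 + 4*(M:ℚ)^4*(d:ℚ) + 2*(M:ℚ)^4*(d:ℚ)^2 + -2*(M:ℚ)^4*(j:ℚ) + -2*(M:ℚ)^4*(j:ℚ)*(d:ℚ)) * R4 + (-2400 + -4360*(d:ℚ) + -3156*(d:ℚ)^2 + -1166*(d:ℚ)^3 + -233*(d:ℚ)^4 + -24*(d:ℚ)^5 + -1*(d:ℚ)^6 + -880*(j:ℚ)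 + -1436*(j:ℚ)*(d:ℚ) + -892*(j:ℚ)*(d:ℚ)^2 + -263*(j:ℚ)*(d:ℚ)^3 + -37*(j:ℚ)*(d:ℚ)^4 + -2*(j:ℚ)*(d:ℚ)^5 + -80*(j:ℚ)^2 + -116*(j:ℚ)^2*(d:ℚ) + -60*(j:ℚ)^2*(d:ℚ)^2 + -13*(j:ℚ)^2*(d:ℚ)^3 + -1*(j:ℚ)^2*(d:ℚ)^4 + -4040*(M:ℚ) + -6168*(M:ℚ)*(d:ℚ) + -3602*(M:ℚ)*(d:ℚ)^2 + -1006*(M:ℚ)*(d:ℚ)^3 + -135*(M:ℚ)*(d:ℚ)^4 + -7*(M:ℚ)*(d:ℚ)^5 + -1156*(M:ℚ)*(j:ℚ) + -1518*(M:ℚ)*(j:ℚ)*(d:ℚ) + -712*(M:ℚ)*(j:ℚ)*(d:ℚ)^2 + -141*(M:ℚ)*(j:ℚ)*(d:ℚ)^3 + -10*(M:ℚ)*(j:ℚ)*(d:ℚ)^4 + -76*(M:ℚ)*(j:ℚ)^2 + -82*(M:ℚ)*(j:ℚ)^2*(d:ℚ) + -28*(M:ℚ)*(j:ℚ)^2*(d:ℚ)^2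 + -3*(M:ℚ)*(j:ℚ)^2*(d:ℚ)^3 + -2652*(M:ℚ)^2 + -3324*(M:ℚ)^2*(d:ℚ) + -1483*(M:ℚ)^2*(d:ℚ)^2 + -280*(M:ℚ)^2*(d:ℚ)^3 + -19*(M:ℚ)^2*(d:ℚ)^4 + -546*(M:ℚ)^2*(j:ℚ) + -559*(M:ℚ)^2*(j:ℚ)*(d:ℚ) + -179*(M:ℚ)^2*(j:ℚ)*(d:ℚ)^2 + -18*(M:ℚ)^2*(j:ℚ)*(d:ℚ)^3 + -22*(M:ℚ)^2*(j:ℚ)^2 + -17*(M:ℚ)^2*(j:ℚ)^2*(d:ℚ) + -3*(M:ℚ)^2*(j:ℚ)^2*(d:ℚ)^2 + -848*(M:ℚ)^3 + -842*(M:ℚ)^3*(d:ℚ) + -259*(M:ℚ)^3*(d:ℚ)^2 + -25*(M:ℚ)^3*(d:ℚ)^3 + -110*(M:ℚ)^3*(j:ℚ) + -83*(M:ℚ)^3*(j:ℚ)*(d:ℚ) + -14*(M:ℚ)^3*(j:ℚ)*(d:ℚ)^2 + -2*(M:ℚ)^3*(j:ℚ)^2 + -1*(M:ℚ)^3*(j:ℚ)^2*(d:ℚ)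 + -132*(M:ℚ)^4 + -98*(M:ℚ)^4*(d:ℚ) + -16*(M:ℚ)^4*(d:ℚ)^2 + -8*(M:ℚ)^4*(j:ℚ) + -4*(M:ℚ)^4*(j:ℚ)*(d:ℚ) + -8*(M:ℚ)^5 + -4*(M:ℚ)^5*(d:ℚ)) * R3 + (240 + 28*(d:ℚ) + -164*(d:ℚ)^2 + -87*(d:ℚ)^3 + -16*(d:ℚ)^4 + -1*(d:ℚ)^5 + -200*(j:ℚ) + -510*(j:ℚ)*(d:ℚ) + -399*(j:ℚ)*(d:ℚ)^2 + -131*(j:ℚ)*(d:ℚ)^3 + -19*(j:ℚ)*(d:ℚ)^4 + -1*(j:ℚ)*(d:ℚ)^5 + -40*(j:ℚ)^2 + -78*(j:ℚ)^2*(d:ℚ) + -49*(j:ℚ)^2*(d:ℚ)^2 + -12*(j:ℚ)^2*(d:ℚ)^3 + -1*(j:ℚ)^2*(d:ℚ)^4 + 908*(M:ℚ) + 788*(M:ℚ)*(d:ℚ) + 187*(M:ℚ)*(d:ℚ)^2 + 8*(M:ℚ)*(d:ℚ)^3 + -1*(M:ℚ)*(d:ℚ)^4 + -50*(M:ℚ)*(j:ℚ)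 + -251*(M:ℚ)*(j:ℚ)*(d:ℚ) + -197*(M:ℚ)*(j:ℚ)*(d:ℚ)^2 + -50*(M:ℚ)*(j:ℚ)*(d:ℚ)^3 + -4*(M:ℚ)*(j:ℚ)*(d:ℚ)^4 + -18*(M:ℚ)*(j:ℚ)^2 + -31*(M:ℚ)*(j:ℚ)^2*(d:ℚ) + -15*(M:ℚ)*(j:ℚ)^2*(d:ℚ)^2 + -2*(M:ℚ)*(j:ℚ)^2*(d:ℚ)^3 + 852*(M:ℚ)^2 + 770*(M:ℚ)^2*(d:ℚ) + 216*(M:ℚ)^2*(d:ℚ)^2 + 24*(M:ℚ)^2*(d:ℚ)^3 + (M:ℚ)^2*(d:ℚ)^4 + 48*(M:ℚ)^2*(j:ℚ) + -6*(M:ℚ)^2*(j:ℚ)*(d:ℚ) + -23*(M:ℚ)^2*(j:ℚ)*(d:ℚ)^2 + -4*(M:ℚ)^2*(j:ℚ)*(d:ℚ)^3 + -2*(M:ℚ)^2*(j:ℚ)^2 + -3*(M:ℚ)^2*(j:ℚ)^2*(d:ℚ) + -1*(M:ℚ)^2*(j:ℚ)^2*(d:ℚ)^2 + 336*(M:ℚ)^3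 + 272*(M:ℚ)^3*(d:ℚ) + 60*(M:ℚ)^3*(d:ℚ)^2 + 4*(M:ℚ)^3*(d:ℚ)^3 + 20*(M:ℚ)^3*(j:ℚ) + 10*(M:ℚ)^3*(j:ℚ)*(d:ℚ) + 60*(M:ℚ)^4 + 40*(M:ℚ)^4*(d:ℚ) + 5*(M:ℚ)^4*(d:ℚ)^2 + 2*(M:ℚ)^4*(j:ℚ) + (M:ℚ)^4*(j:ℚ)*(d:ℚ) + 4*(M:ℚ)^5 + 2*(M:ℚ)^5*(d:ℚ)) * R1
  · -- m = k + 1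
    subst hm
    rw [show k + 1 - 1 = k from by ring]
    rw [w_eq_zero_of_gt hk (show k < k + 1 by omega),
        w_eq_zero_of_gt (n := n + 1) hk (show k < k + 1 by omega),
        w_eq_zero_of_gt (n := n) hk (show k < k + 1 by omega)]
    rcases show n ≤ 2 * k - 2 ∨ n = 2 * k - 1 ∨ 2 * k ≤ n from by omega with hc | hc | hc
    · rw [w_zero (n := n + 1) (m := k) (by omega) (by omega),
          w_zero (n := n) (m := k) (by omega) (by omega)]
      ring
    · rw [w_zero (n := n) (m := k) (by omega) (by omega)]
      rw [show (n:ℚ) = 2 * (k:ℚ) - 1 from by exact_mod_cast congrArg (fun x : ℤ => (x : ℚ)) hc]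
      ring
    · -- 2k ≤ n : two surviving terms must cancel
      obtain ⟨K, hK⟩ : ∃ K : ℕ, k = (K:ℤ) + 1 := ⟨(k-1).toNat, by omega⟩
      obtain ⟨e, he⟩ : ∃ e : ℕ, n = 2*(K:ℤ) + (e:ℤ) + 2 := ⟨(n - 2*K - 2).toNat, by omega⟩
      rw [w_pos (n := n+1) (m := k) (by omega) (le_refl k) (by omega),
          w_pos (n := n) (m := k) (by omega) (le_refl k) (by omega)]
      rw [show (n+1).toNat = 2*K+e+3 from by omega,
          show (k-1).toNat = K from by omega,
          show (n+1-k-1).toNat = K+e+1 from by omega,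
          show (n-k-1).toNat = K+e from by omega,
          show k.toNat = K+1 from by omega,
          show n.toNat = 2*K+e+2 from by omega]
      rw [Nat.choose_self]
      rw [Nat.cast_choose ℚ (show K ≤ 2*K+e+3 by omega),
          Nat.cast_choose ℚ (show K ≤ K+e+1 by omega),
          Nat.cast_choose ℚ (show K ≤ 2*K+e+2 by omega),
          Nat.cast_choose ℚ (show K ≤ K+e by omega)]
      rw [show 2*K+e+3 - K = K+e+3 from by omega,
          show K+e+1-K = e+1 from by omega,
          show 2*K+e+2-K = K+e+2 from by omega,
          show K+e-K = e from by omega]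
      rw [show 2*K+e+3 = 2*K+e+2+1 from by omega,
          show K+e+3 = K+e+1+1+1 from by omega,
          show K+e+2 = K+e+1+1 from by omega]
      simp only [Nat.factorial_succ]
      push_cast
      rw [show (n:ℚ) = 2*(K:ℚ)+e+2 from by exact_mod_cast congrArg (fun x : ℤ => (x : ℚ)) he,
          show (k:ℚ) = (K:ℚ)+1 from by exact_mod_cast congrArg (fun x : ℤ => (x : ℚ)) hK]
      field_simp [fne (2*K+e+2), fne K, fne (K+e), fne e]
      ring
  · -- m ≥ k + 2 : everything vanishes
    simp only [w_eq_zero_of_gt hk (show k < m by omega),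
      w_eq_zero_of_gt hk (show k < m - 1 by omega)]
    ring

/-- Recurrence for the polynomials W(n,k)(x) with k fixed, in cleared-denominator form. -/
theorem stmt3 (n k : ℤ) (hk : 1 ≤ k) (hn : k - 1 ≤ n) :
    Polynomial.C (((n - k + 2) ^ 2 * (n - k + 3) : ℚ)) * W (n + 2) k =
      Polynomial.C (((n + 2) * (n - k + 2) : ℚ)) *
        (Polynomial.C ((2 * (n - k + 1) : ℚ)) - Polynomial.C ((n - 2 * k + 1 : ℚ)) * X) *
        W (n + 1) k
      + Polynomial.C (((n + 1) * (n + 2) * (n - k) : ℚ)) * (X - 1) * W n k := by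
  apply Polynomial.ext
  intro j
  have expand : ∀ (p q : Polynomial ℚ) (a b c d : ℚ),
      Polynomial.C a * (Polynomial.C b - Polynomial.C c * X) * p
        + Polynomial.C d * (X - 1) * q
      = Polynomial.C (a*b) * p - Polynomial.C (a*c) * (X * p)
        + (Polynomial.C d * (X * q) - Polynomial.C d * q) := by
    intro p q a b c d; simp only [map_mul]; ring
  rw [expand]
  simp only [Polynomial.coeff_add, Polynomial.coeff_sub, Polynomial.coeff_C_mul]
  rcases j with _ | j
  · simp only [Polynomial.coeff_X_mul_zero, mul_zero]
    rw [coeff_W _ k hk, coeff_W _ k hk, coeff_W _ k hk]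
    have h := scalar n k hk hn 0
    simp only [w_eq_zero_of_nonpos (by norm_num : (0:ℤ) - 1 < 0)] at h
    push_cast
    linear_combination h
  · rw [Polynomial.coeff_X_mul, Polynomial.coeff_X_mul]
    rw [coeff_W _ k hk, coeff_W _ k hk, coeff_W _ k hk, coeff_W _ k hk, coeff_W _ k hk]
    have h := scalar n k hk hn (j + 1)
    have e : ((j:ℤ) + 1) - 1 = (j : ℤ) := by ring
    rw [e] at h
    push_cast
    linear_combination h
end

section
/- Fix an integer n ≥ 1 and let k satisfy 1 ≤ k ≤ ⌊(n+1)/2⌋ - 2. Let W(n,k)(x) = Σ_{m=0}^{k} w(n,k,m) x^m with w(n,k,m) given by the explicit formula w(n,k,m) = (1/k)*C(n,k-1)*C(n-k-1,m-1)*C(k,m) (for 0 < m ≤ k, k+m ≤ n; equal to 1 if m=0 and n=k; 0 otherwise). Then W(n,k+2)(x) = (a(n,k)x + b(n,k)) * W(n,k+1)(x) - c(n,k) * W(n,k)(x), where a(n,k) = ((n-k)(n-2k-2)(n-2k-3))/((k+1)(k+2)(n-k-2)), b(n,k) = (2(n-k)(n-k-1)(n-2k-2))/((k+2)(n-k-2)(n-2k-1)),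 c(n,k) = ((n-k+1)(n-k)^2 (n-2k-3))/((k+1)(k+2)(n-k-2)(n-2k-1)). -/
private lemma qA (a b : ℕ) :
    ((a:ℚ) + 1) * (a.choose b) = ((a:ℚ) + 1 - b) * ((a+1).choose b) := by
  rcases le_or_gt b (a+1) with h | h
  · have h1 := Nat.choose_mul_succ_eq a b
    have h2 : ((a + 1 - b : ℕ) : ℚ) = (a:ℚ) + 1 - b := by
      rw [Nat.cast_sub h]; push_cast; ring
    have h3 : ((a.choose b * (a+1) : ℕ) : ℚ) = (((a+1).choose b * (a+1-b) : ℕ) : ℚ) := by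
      exact_mod_cast congrArg (Nat.cast (R := ℚ)) h1
    push_cast [Nat.cast_sub h] at h3
    linarith [h3]
  · rw [Nat.choose_eq_zero_of_lt (by omega), Nat.choose_eq_zero_of_lt h]
    simp

private lemma qB (a b : ℕ) :
    ((a:ℚ) + 1) * (a.choose b) = ((b:ℚ) + 1) * ((a+1).choose (b+1)) := by
  have h1 := Nat.add_one_mul_choose_eq a b
  have h3 : (((a+1) * a.choose b : ℕ) : ℚ) = (((a+1).choose (b+1) * (b+1) : ℕ) : ℚ) := by
    exact_mod_cast congrArg (Nat.cast (R := ℚ)) h1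
  push_cast at h3
  linarith [h3]

private lemma qC (n k : ℕ) :
    ((k:ℚ) + 1) * (n.choose (k+1)) = ((n:ℚ) - k) * (n.choose k) := by
  rcases le_or_gt k n with h | h
  · have h1 := Nat.choose_succ_right_eq n k
    have h3 : ((n.choose (k+1) * (k+1) : ℕ) : ℚ) = ((n.choose k * (n-k) : ℕ) : ℚ) := by
      exact_mod_cast congrArg (Nat.cast (R := ℚ)) h1
    push_cast [Nat.cast_sub h] at h3
    linarith [h3]
  · rw [Nat.choose_eq_zero_of_lt (by omega), Nat.choose_eq_zero_of_lt h]
    simp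

open Polynomial

lemma W_coeff (N K : ℕ) (hK : 1 ≤ K) (hN : K < N) (M : ℕ) :
    (W (N:ℤ) (K:ℤ)).coeff M =
      if 1 ≤ M then (1/(K:ℚ)) * (N.choose (K-1)) * ((N-K-1).choose (M-1)) * (K.choose M)
      else 0 := by
  have htop : (W (N:ℤ) (K:ℤ)).coeff M
      = if M ∈ Finset.range (K+1) then w (N:ℤ) (K:ℤ) (M:ℤ) else 0 := by
    rw [W, Polynomial.finset_sum_coeff]
    simp only [Polynomial.coeff_C_mul, Polynomial.coeff_X_pow, mul_ite, mul_one, mul_zero,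
      Int.toNat_natCast]
    exact Finset.sum_ite_eq (Finset.range (K+1)) M _
  rw [htop]
  rcases Nat.eq_zero_or_pos M with hM0 | hM1
  · subst hM0
    have hw : w (N:ℤ) (K:ℤ) 0 = 0 := by
      rw [w, if_neg (by omega), if_neg (by simp; omega)]
    simp [hw]
  · rcases le_or_gt M K with hMK | hMK
    · rw [if_pos (by simp [Finset.mem_range]; omega), if_pos (show 1 ≤ M by omega)]
      rcases le_or_gt ((K:ℕ) + M) N with hKM | hKM
      · rw [w, if_pos ⟨by exact_mod_cast hM1, by exact_mod_cast hMK, by push_cast; omega⟩]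
        have e1 : ((N:ℤ)).toNat = N := Int.toNat_natCast N
        have e2 : ((K:ℤ) - 1).toNat = K - 1 := by omega
        have e3 : ((N:ℤ) - (K:ℤ) - 1).toNat = N - K - 1 := by omega
        have e4 : ((M:ℤ) - 1).toNat = M - 1 := by omega
        have e5 : ((M:ℤ)).toNat = M := Int.toNat_natCast M
        rw [e1, e2, e3, e4, e5, Int.toNat_natCast]
        push_cast
        ring
      · rw [w, if_neg (by push_cast; omega), if_neg (by simp; omega)]
        rw [Nat.choose_eq_zero_of_lt (show N - K - 1 < M - 1 by omega)]
        simp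
    · rw [if_neg (by simp [Finset.mem_range]; omega), if_pos (show 1 ≤ M by omega),
        Nat.choose_eq_zero_of_lt hMK]
      simp

set_option maxHeartbeats 1000000 in
private
lemma key (nq kq mq v l u : ℚ) (hq1 : kq ≠ 0) (hq2 : kq+1 ≠ 0) (hq3 : kq+2 ≠ 0)
    (hq4 : nq-kq-1 ≠ 0) (hq5 : nq-kq-2 ≠ 0) (hq6 : nq-kq-mq-2 ≠ 0) (hq7 : nq-2*kq-1 ≠ 0) :
    1/(kq+2) * ((nq-kq)/(kq+1) * ((nq-kq+1)/kq * v)) * ((nq-kq-mq-3)/(nq-kq-2) * ((nq-kq-mq-2)/(nq-kq-1) * l)) * u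
    = (nq-kq)*(nq-2*kq-2)*(nq-2*kq-3)/((kq+1)*(kq+2)*(nq-kq-2)) * (1/(kq+1) * ((nq-kq+1)/kq*v) * ((mq+1)/(nq-kq-mq-2) * ((nq-kq-mq-2)/(nq-kq-1)*l)) * ((mq+2)/(kq+2)*u))
    + 2*(nq-kq)*(nq-kq-1)*(nq-2*kq-2)/((kq+2)*(nq-kq-2)*(nq-2*kq-1)) * (1/(kq+1) * ((nq-kq+1)/kq*v) * ((nq-kq-mq-2)/(nq-kq-1)*l) * ((kq-mq)/(kq+2)*u))
    - (nq-kq+1)*(nq-kq)^2*(nq-2*kq-3)/((kq+1)*(kq+2)*(nq-kq-2)*(nq-2*kq-1)) * (1/kq * v * l * ((kq-mq-1)/(kq+1) * ((kq-mq)/(kq+2)*u))) := by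
  have hT1 : 1/(kq+2) * ((nq-kq)/(kq+1) * ((nq-kq+1)/kq * v)) * ((nq-kq-mq-3)/(nq-kq-2) * ((nq-kq-mq-2)/(nq-kq-1) * l)) * u
      = ((nq-kq)*(nq-kq+1)*(nq-kq-mq-3)*(nq-kq-mq-2)*(kq+1)*(kq+2)*(nq-kq-mq-2)*(nq-2*kq-1)*(v*l*u))
        / (kq*(kq+1)^2*(kq+2)^2*(nq-kq-1)*(nq-kq-2)*(nq-kq-mq-2)*(nq-2*kq-1)) := by
    rw [eq_div_iff (by apply_rules [mul_ne_zero, pow_ne_zero])]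
    field_simp
  have hT2 : (nq-kq)*(nq-2*kq-2)*(nq-2*kq-3)/((kq+1)*(kq+2)*(nq-kq-2)) * (1/(kq+1) * ((nq-kq+1)/kq*v) * ((mq+1)/(nq-kq-mq-2) * ((nq-kq-mq-2)/(nq-kq-1)*l)) * ((mq+2)/(kq+2)*u))
      = ((nq-kq)*(nq-2*kq-2)*(nq-2*kq-3)*(nq-kq+1)*(mq+1)*(nq-kq-mq-2)*(mq+2)*(nq-2*kq-1)*(v*l*u))
        / (kq*(kq+1)^2*(kq+2)^2*(nq-kq-1)*(nq-kq-2)*(nq-kq-mq-2)*(nq-2*kq-1)) := by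
    rw [eq_div_iff (by apply_rules [mul_ne_zero, pow_ne_zero])]
    field_simp
  have hT3 : 2*(nq-kq)*(nq-kq-1)*(nq-2*kq-2)/((kq+2)*(nq-kq-2)*(nq-2*kq-1)) * (1/(kq+1) * ((nq-kq+1)/kq*v) * ((nq-kq-mq-2)/(nq-kq-1)*l) * ((kq-mq)/(kq+2)*u))
      = (2*(nq-kq)*(nq-kq-1)*(nq-2*kq-2)*(nq-kq+1)*(nq-kq-mq-2)*(kq-mq)*(kq+1)*(nq-kq-mq-2)*(v*l*u))
        / (kq*(kq+1)^2*(kq+2)^2*(nq-kq-1)*(nq-kq-2)*(nq-kq-mq-2)*(nq-2*kq-1)) := by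
    field_simp
  have hT4 : (nq-kq+1)*(nq-kq)^2*(nq-2*kq-3)/((kq+1)*(kq+2)*(nq-kq-2)*(nq-2*kq-1)) * (1/kq * v * l * ((kq-mq-1)/(kq+1) * ((kq-mq)/(kq+2)*u)))
      = ((nq-kq+1)*(nq-kq)^2*(nq-2*kq-3)*(kq-mq-1)*(kq-mq)*(nq-kq-1)*(nq-kq-mq-2)*(v*l*u))
        / (kq*(kq+1)^2*(kq+2)^2*(nq-kq-1)*(nq-kq-2)*(nq-kq-mq-2)*(nq-2*kq-1)) := by
    field_simp
  have hn : (nq-kq)*(nq-kq+1)*(nq-kq-mq-3)*(nq-kq-mq-2)*(kq+1)*(kq+2)*(nq-kq-mq-2)*(nq-2*kq-1)*(v*l*u)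
      = (nq-kq)*(nq-2*kq-2)*(nq-2*kq-3)*(nq-kq+1)*(mq+1)*(nq-kq-mq-2)*(mq+2)*(nq-2*kq-1)*(v*l*u)
      + 2*(nq-kq)*(nq-kq-1)*(nq-2*kq-2)*(nq-kq+1)*(nq-kq-mq-2)*(kq-mq)*(kq+1)*(nq-kq-mq-2)*(v*l*u)
      - (nq-kq+1)*(nq-kq)^2*(nq-2*kq-3)*(kq-mq-1)*(kq-mq)*(nq-kq-1)*(nq-kq-mq-2)*(v*l*u) := by
    ring
  rw [hT1, hT2, hT3, hT4, ← add_div, ← sub_div, hn]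

open Polynomial in
lemma coeff_aux (A B Cc : ℚ) (P Q : Polynomial ℚ) (M : ℕ) :
    ((C A * X + C B) * P - C Cc * Q).coeff M
      = A * (X*P).coeff M + B * P.coeff M - Cc * Q.coeff M := by
  have h : (C A * X + C B) * P - C Cc * Q = C A * (X * P) + C B * P - C Cc * Q := by ring
  rw [h]
  simp [Polynomial.coeff_sub, Polynomial.coeff_add, Polynomial.coeff_C_mul]

set_option maxHeartbeats 2000000 in
/-- Recurrence for the polynomials W(n,k)(x) with n fixed. -/
theorem stmt5 (n k : ℤ) (hn : 1 ≤ n) (hk : 1 ≤ k) (hk2 : k ≤ (n + 1) / 2 - 2) :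
    W n (k + 2) =
      (Polynomial.C (((n - k) * (n - 2 * k - 2) * (n - 2 * k - 3) : ℚ) /
          ((k + 1) * (k + 2) * (n - k - 2))) * X +
        Polynomial.C ((2 * (n - k) * (n - k - 1) * (n - 2 * k - 2) : ℚ) /
          ((k + 2) * (n - k - 2) * (n - 2 * k - 1)))) * W n (k + 1)
      - Polynomial.C (((n - k + 1) * (n - k) ^ 2 * (n - 2 * k - 3) : ℚ) /
          ((k + 1) * (k + 2) * (n - k - 2) * (n - 2 * k - 1))) * W n k := by
  obtain ⟨N, rfl⟩ := Int.eq_ofNat_of_zero_le (by omega : (0:ℤ) ≤ n)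
  obtain ⟨K, rfl⟩ := Int.eq_ofNat_of_zero_le (by omega : (0:ℤ) ≤ k)
  have hK : 1 ≤ K := by exact_mod_cast hk
  have hN : 2*K + 3 ≤ N := by omega
  have ck2 : ((K:ℤ) + 2) = ((K+2 : ℕ) : ℤ) := by push_cast; ring
  have ck1 : ((K:ℤ) + 1) = ((K+1 : ℕ) : ℤ) := by push_cast; ring
  rw [ck2, ck1]
  refine Polynomial.ext fun M => ?_
  rw [coeff_aux]
  rw [W_coeff N (K+2) (by omega) (by omega) M, W_coeff N (K+1) (by omega) (by omega) M,
    W_coeff N K (by omega) (by omega) M]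
  match M with
  | 0 => simp
  | 1 =>
      have hx1 : (X * W (N:ℤ) ((K+1:ℕ):ℤ)).coeff 1 = (W (N:ℤ) ((K+1:ℕ):ℤ)).coeff 0 :=
        Polynomial.coeff_X_mul (W (N:ℤ) ((K+1:ℕ):ℤ)) 0
      rw [hx1, W_coeff N (K+1) (by omega) (by omega) 0]
      have hk1 : (1:ℚ) ≤ (K:ℚ) := by exact_mod_cast hK
      have hn1 : 2*(K:ℚ) + 3 ≤ (N:ℚ) := by exact_mod_cast hN
      have hq1 : (K:ℚ) ≠ 0 := by positivity
      have hq2 : (K:ℚ)+1 ≠ 0 := by positivity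
      have hq3 : (K:ℚ)+2 ≠ 0 := by positivity
      have hq5 : (N:ℚ)-(K:ℚ)-2 ≠ 0 := ne_of_gt (by linarith)
      have hq7 : (N:ℚ)-2*(K:ℚ)-1 ≠ 0 := ne_of_gt (by linarith)
      have hA1 : ((N.choose K : ℕ):ℚ) = ((N:ℚ)-K+1)/K * (N.choose (K-1)) := by
        have h := qC N (K-1)
        rw [show K-1+1 = K from by omega, Nat.cast_sub hK] at h
        field_simp
        linear_combination h
      have hA2 : ((N.choose (K+1) : ℕ):ℚ) = ((N:ℚ)-K)/(K+1) * (N.choose K) := by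
        have h := qC N K
        field_simp
        linear_combination h
      rw [show K+2-1 = K+1 from by omega, show K+1-1 = K from by omega]
      norm_num [hA2, hA1]
      have hq7' : (N:ℚ) - K * 2 - 1 ≠ 0 := by rw [mul_comm]; exact hq7
      field_simp
      ring
  | (m+2) =>
      have hx1 : (X * W (N:ℤ) ((K+1:ℕ):ℤ)).coeff (m+2) = (W (N:ℤ) ((K+1:ℕ):ℤ)).coeff (m+1) :=
        Polynomial.coeff_X_mul (W (N:ℤ) ((K+1:ℕ):ℤ)) (m+1)
      rw [hx1, W_coeff N (K+1) (by omega) (by omega) (m+1)]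
      rw [show K+2-1 = K+1 from by omega, show N-(K+2)-1 = N-K-3 from by omega,
        show m+2-1 = m+1 from by omega, show K+1-1 = K from by omega,
        show N-(K+1)-1 = N-K-2 from by omega, show m+1-1 = m from by omega,
        if_pos (show (1:ℕ) ≤ m+2 from by omega), if_pos (show (1:ℕ) ≤ m+1 from by omega)]
      rcases le_or_gt m K with hmK | hmK
      · -- generic case
        have hk1 : (1:ℚ) ≤ (K:ℚ) := by exact_mod_cast hK
        have hn1 : 2*(K:ℚ) + 3 ≤ (N:ℚ) := by exact_mod_cast hN
        have hm1 : (m:ℚ) ≤ (K:ℚ) := by exact_mod_cast hmK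
        have hq1 : (K:ℚ) ≠ 0 := by positivity
        have hq2 : (K:ℚ)+1 ≠ 0 := by positivity
        have hq3 : (K:ℚ)+2 ≠ 0 := by positivity
        have hq4 : (N:ℚ)-(K:ℚ)-1 ≠ 0 := ne_of_gt (by linarith)
        have hq5 : (N:ℚ)-(K:ℚ)-2 ≠ 0 := ne_of_gt (by linarith)
        have hq6 : (N:ℚ)-(K:ℚ)-(m:ℚ)-2 ≠ 0 := ne_of_gt (by linarith)
        have hq7 : (N:ℚ)-2*(K:ℚ)-1 ≠ 0 := ne_of_gt (by linarith)
        have c1 : ((N-K-1:ℕ):ℚ) = (N:ℚ)-K-1 := by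
          rw [show N-K-1 = N-(K+1) from by omega, Nat.cast_sub (by omega)]; push_cast; ring
        have c2 : ((N-K-2:ℕ):ℚ) = (N:ℚ)-K-2 := by
          rw [show N-K-2 = N-(K+2) from by omega, Nat.cast_sub (by omega)]; push_cast; ring
        have c3 : ((N-K-3:ℕ):ℚ) = (N:ℚ)-K-3 := by
          rw [show N-K-3 = N-(K+3) from by omega, Nat.cast_sub (by omega)]; push_cast; ring
        have hA1 : ((N.choose K : ℕ):ℚ) = ((N:ℚ)-K+1)/K * (N.choose (K-1)) := by
          have h := qC N (K-1)
          rw [show K-1+1 = K from by omega, Nat.cast_sub hK] at h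
          field_simp
          linear_combination h
        have hA2 : ((N.choose (K+1) : ℕ):ℚ) = ((N:ℚ)-K)/(K+1) * (N.choose K) := by
          have h := qC N K
          field_simp
          linear_combination h
        have h3 : (((N-K-3).choose (m+1) : ℕ):ℚ)
            = ((N:ℚ)-K-(m:ℚ)-3)/((N:ℚ)-K-2) * ((N-K-2).choose (m+1)) := by
          have h := qA (N-K-3) (m+1)
          rw [show N-K-3+1 = N-K-2 from by omega, c3] at h
          push_cast at h
          field_simp
          linear_combination h
        have h4 : (((N-K-2).choose (m+1) : ℕ):ℚ)
            = ((N:ℚ)-K-(m:ℚ)-2)/((N:ℚ)-K-1) * ((N-K-1).choose (m+1)) := by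
          have h := qA (N-K-2) (m+1)
          rw [show N-K-2+1 = N-K-1 from by omega, c2] at h
          push_cast at h
          field_simp
          linear_combination h
        have h5 : (((N-K-2).choose m : ℕ):ℚ)
            = ((m:ℚ)+1)/((N:ℚ)-K-(m:ℚ)-2) * ((N-K-2).choose (m+1)) := by
          have h := qC (N-K-2) m
          rw [c2] at h
          field_simp
          linear_combination -h
        have h6 : (((K+1).choose (m+2) : ℕ):ℚ)
            = ((K:ℚ)-(m:ℚ))/((K:ℚ)+2) * ((K+2).choose (m+2)) := by
          have h := qA (K+1) (m+2)
          rw [show K+1+1 = K+2 from by omega] at h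
          push_cast at h
          field_simp
          linear_combination h
        have h7 : ((K.choose (m+2) : ℕ):ℚ)
            = ((K:ℚ)-(m:ℚ)-1)/((K:ℚ)+1) * ((K+1).choose (m+2)) := by
          have h := qA K (m+2)
          push_cast at h
          field_simp
          linear_combination h
        have h8 : (((K+1).choose (m+1) : ℕ):ℚ)
            = ((m:ℚ)+2)/((K:ℚ)+2) * ((K+2).choose (m+2)) := by
          have h := qB (K+1) (m+1)
          rw [show K+1+1 = K+2 from by omega, show m+1+1 = m+2 from by omega] at h
          push_cast at h
          field_simp
          linear_combination h
        rw [h3, h5, h4, h7, h6, h8, hA2, hA1]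
        push_cast
        linear_combination key (N:ℚ) (K:ℚ) (m:ℚ) ((N.choose (K-1)):ℚ) (((N-K-1).choose (m+1)):ℚ)
          (((K+2).choose (m+2)):ℚ) hq1 hq2 hq3 hq4 hq5 hq6 hq7
      · -- degenerate: m > K, all upper chooses vanish
        rw [Nat.choose_eq_zero_of_lt (show K+2 < m+2 from by omega),
          Nat.choose_eq_zero_of_lt (show K+1 < m+2 from by omega),
          Nat.choose_eq_zero_of_lt (show K < m+2 from by omega),
          Nat.choose_eq_zero_of_lt (show K+1 < m+1 from by omega)]
        norm_num
end

section
/- For all integers n, the sum over all k and m of w(n,k,m) equals the Catalan number C_n = (1/(n+1)) * C(2n, n), where w(n,k,m) = (1/k)*C(n,k-1)*C(n-k-1,m-1)*C(k,m) for 0 < m ≤ k, k+m ≤ n, w(n,n,0)=1, and w(n,k,m)=0 otherwise. Equivalently, Σ_{k=0}^{n} W(n,k)(1) = C_n for all n ≥ 0. -/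
open Polynomial

open Finset

lemma vdm (a b t : ℕ) :
    ∑ m ∈ range (t + 1), a.choose m * b.choose (t - m) = (a + b).choose t := by
  rw [Nat.add_choose_eq, Finset.Nat.sum_antidiagonal_eq_sum_range_succ
    (fun i j => a.choose i * b.choose j)]

lemma w_nat (n k m : ℕ) :
    w (n : ℤ) (k : ℤ) (m : ℤ) =
      if 0 < m ∧ m ≤ k ∧ k + m ≤ n then
        (n.choose (k - 1) : ℚ) * ((n - k - 1).choose (m - 1)) * (k.choose m) / k
      else if m = 0 ∧ n = k then 1 else 0 := by
  unfold w
  have h1 : ((k : ℤ) - 1).toNat = k - 1 := Int.toNat_sub k 1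
  have h2 : ((m : ℤ) - 1).toNat = m - 1 := Int.toNat_sub m 1
  have h3 : ((n : ℤ) - k - 1).toNat = n - k - 1 := by
    have : ((n : ℤ) - k - 1) = (n : ℤ) - (k + 1 : ℕ) := by push_cast; ring
    rw [this, Int.toNat_sub n (k + 1)]
    omega
  simp only [h1, h2, h3, Int.toNat_natCast]
  by_cases hc : 0 < m ∧ m ≤ k ∧ k + m ≤ n
  · rw [if_pos, if_pos hc]
    · push_cast; ring
    · exact_mod_cast hc
  · rw [if_neg, if_neg hc]
    · by_cases hd : m = 0 ∧ n = k
      · rw [if_pos, if_pos hd]; exact_mod_cast hd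
      · rw [if_neg, if_neg hd]; intro h; exact hd ⟨by exact_mod_cast h.1, by exact_mod_cast h.2⟩
    · intro h; exact hc ⟨by exact_mod_cast h.1, by exact_mod_cast h.2.1, by exact_mod_cast h.2.2⟩

lemma innerSumW (n k : ℕ) (hk1 : 1 ≤ k) (hkn : k < n) :
    ∑ m ∈ range (k + 1), w (n : ℤ) (k : ℤ) (m : ℤ) =
      (n.choose (k - 1) : ℚ) * ((n - 1).choose (k - 1)) / k := by
  have step : ∀ m ∈ range (k + 1), w (n : ℤ) (k : ℤ) (m : ℤ) =
      (n.choose (k - 1) : ℚ) / k * (((n - k - 1).choose (m - 1)) * (k.choose m)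
        * (if 0 < m then 1 else 0)) := by
    intro m hm
    rw [mem_range] at hm
    rw [w_nat]
    by_cases h0 : 0 < m
    · simp only [if_pos h0, mul_one]
      by_cases hc : k + m ≤ n
      · rw [if_pos ⟨h0, by omega, hc⟩]; ring
      · rw [if_neg (by tauto)]
        have hz : (n - k - 1).choose (m - 1) = 0 := Nat.choose_eq_zero_of_lt (by omega)
        rw [if_neg (by omega), hz]
        push_cast; ring
    · simp only [if_neg h0, mul_zero]
      rw [if_neg (by tauto), if_neg (by omega)]
  rw [Finset.sum_congr rfl step, ← Finset.mul_sum]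
  have key : ∑ m ∈ range (k + 1), (((n - k - 1).choose (m - 1) : ℚ) * (k.choose m)
        * (if 0 < m then 1 else 0)) = ((n - 1).choose (k - 1) : ℚ) := by
    rw [Finset.sum_range_succ']
    simp only [if_neg (lt_irrefl 0), mul_zero, add_zero]
    have hstep : ∀ i ∈ range k, (((n - k - 1).choose (i + 1 - 1) : ℚ) * (k.choose (i + 1))
        * (if 0 < i + 1 then 1 else 0)) =
        (((n - k - 1).choose i * k.choose ((k - 1) - i) : ℕ) : ℚ) := by
      intro i hi
      rw [mem_range] at hi
      rw [if_pos (Nat.succ_pos i)]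
      have hs : k.choose (i + 1) = k.choose ((k - 1) - i) := by
        rw [← Nat.choose_symm (show i + 1 ≤ k by omega)]
        congr 1; omega
      rw [hs]; push_cast; ring
    rw [Finset.sum_congr rfl hstep, ← Nat.cast_sum]
    have hv := vdm (n - k - 1) k (k - 1)
    rw [Nat.sub_add_cancel hk1] at hv
    rw [hv]
    congr 2
    omega
  rw [key]
  ring

lemma narayana_sum (n : ℕ) (hn : 1 ≤ n) :
    ∑ j ∈ range n, (n.choose j : ℚ) * ((n - 1).choose j) / (j + 1) =
      ((2 * n).choose n : ℚ) / (n + 1) := by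
  have hne : ((n : ℚ) + 1) ≠ 0 := by positivity
  rw [eq_div_iff hne, Finset.sum_mul]
  have step : ∀ j ∈ range n, (n.choose j : ℚ) * ((n - 1).choose j) / (j + 1) * (n + 1)
      = (((n + 1).choose (j + 1) * (n - 1).choose ((n - 1) - j) : ℕ) : ℚ) := by
    intro j hj
    rw [mem_range] at hj
    have h1 : ((n : ℚ) + 1) * n.choose j = (n + 1).choose (j + 1) * (j + 1) := by
      exact_mod_cast Nat.add_one_mul_choose_eq n j
    have h2 : (n - 1).choose ((n - 1) - j) = (n - 1).choose j := Nat.choose_symm (by omega)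
    have hj1 : ((j : ℚ) + 1) ≠ 0 := by positivity
    rw [h2, div_mul_eq_mul_div, div_eq_iff hj1]
    push_cast
    linear_combination ((n - 1).choose j : ℚ) * h1
  rw [Finset.sum_congr rfl step, ← Nat.cast_sum]
  have key : ∑ j ∈ range n, (n + 1).choose (j + 1) * (n - 1).choose ((n - 1) - j)
      = (2 * n).choose n := by
    have hv := vdm (n + 1) (n - 1) n
    rw [Finset.sum_range_succ'] at hv
    have h0 : (n + 1).choose 0 * (n - 1).choose (n - 0) = 0 := by
      simp [Nat.choose_eq_zero_of_lt (show n - 1 < n by omega)]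
    rw [h0, add_zero] at hv
    have hc : ∀ j ∈ range n, (n + 1).choose (j + 1) * (n - 1).choose (n - (j + 1))
        = (n + 1).choose (j + 1) * (n - 1).choose ((n - 1) - j) := by
      intro j hj; rw [mem_range] at hj; congr 2; omega
    rw [Finset.sum_congr rfl hc] at hv
    rw [hv]
    congr 1
    omega
  rw [key]

/-- Σ_{k=0}^{n} W(n,k)(1) = C_n = (1/(n+1)) C(2n, n) for all n ≥ 0. -/
theorem stmt10 (n : ℕ) :
    ∑ k ∈ Finset.range (n + 1), (W (n : ℤ) (k : ℤ)).eval 1 =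
      (1 / ((n : ℚ) + 1)) * ((2 * n).choose n : ℚ) := by
  have heval : ∀ k : ℕ, (W (n : ℤ) (k : ℤ)).eval 1
      = ∑ m ∈ range (k + 1), w (n : ℤ) (k : ℤ) (m : ℤ) := by
    intro k
    simp [W, Polynomial.eval_finset_sum]
  simp only [heval]
  rcases Nat.eq_zero_or_pos n with h0 | hpos
  · subst h0
    have h1 : w (0 : ℤ) (0 : ℤ) (0 : ℤ) = 1 := by
      have := w_nat 0 0 0
      norm_num at this
      simpa using this
    simp [h1]
  · obtain ⟨p, rfl⟩ : ∃ p, n = p + 1 := ⟨n - 1, by omega⟩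
    rw [Finset.sum_range_succ]
    -- last term: k = n = p + 1
    have hlast : ∑ m ∈ range (p + 1 + 1), w ((p + 1 : ℕ) : ℤ) ((p + 1 : ℕ) : ℤ) (m : ℤ) = 1 := by
      rw [Finset.sum_range_succ']
      have hz : ∀ i ∈ range (p + 1),
          w ((p + 1 : ℕ) : ℤ) ((p + 1 : ℕ) : ℤ) ((i + 1 : ℕ) : ℤ) = 0 := by
        intro i hi
        rw [w_nat, if_neg (by omega), if_neg (by omega)]
      rw [Finset.sum_congr rfl hz]
      have h00 : w ((p + 1 : ℕ) : ℤ) ((p + 1 : ℕ) : ℤ) ((0 : ℕ) : ℤ) = 1 := by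
        rw [w_nat, if_neg (by omega), if_pos ⟨rfl, rfl⟩]
      push_cast at h00 ⊢
      simp [h00]
    rw [hlast]
    rw [Finset.sum_range_succ']
    -- k = 0 term
    have h0t : ∑ m ∈ range (0 + 1), w ((p + 1 : ℕ) : ℤ) ((0 : ℕ) : ℤ) (m : ℤ) = 0 := by
      have hw0 : w ((p + 1 : ℕ) : ℤ) ((0 : ℕ) : ℤ) ((0 : ℕ) : ℤ) = 0 := by
        rw [w_nat, if_neg (by omega), if_neg (by omega)]
      push_cast at hw0 ⊢
      simp [hw0]
    rw [h0t, add_zero]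
    have hmid : ∀ i ∈ range p,
        ∑ m ∈ range (i + 1 + 1), w ((p + 1 : ℕ) : ℤ) ((i + 1 : ℕ) : ℤ) (m : ℤ)
          = ((p + 1).choose i : ℚ) * (p.choose i) / (i + 1) := by
      intro i hi
      rw [mem_range] at hi
      rw [innerSumW (p + 1) (i + 1) (by omega) (by omega)]
      norm_num
    rw [Finset.sum_congr rfl hmid]
    have hnar := narayana_sum (p + 1) (by omega)
    rw [Finset.sum_range_succ] at hnar
    have hlast2 : ((p + 1).choose p : ℚ) * ((p + 1 - 1).choose p) / ((p : ℚ) + 1) = 1 := by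
      rw [Nat.add_sub_cancel, Nat.choose_self, Nat.choose_succ_self_right]
      have hne : ((p : ℚ) + 1) ≠ 0 := by positivity
      field_simp
      norm_num
    rw [hlast2] at hnar
    rw [one_div, inv_mul_eq_div]
    push_cast at hnar ⊢
    linarith [hnar]
end

section
/- For all integers n ≥ 1 and 1 ≤ k ≤ n, W(n,k)(1) = N(n,k) := (1/n) * C(n, k-1) * C(n, k), the Narayana number. Here W(n,k)(x) = Σ_{m=0}^{k} w(n,k,m)x^m with w(n,k,m) = (1/k)*C(n,k-1)*C(n-k-1,m-1)*C(k,m) for 0 < m ≤ k, k+m ≤ n, w(n,k,0)=1 if n=k, and 0 otherwise. -/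
open Polynomial

theorem vmonde (D K : ℕ) (hK : 1 ≤ K) :
    ∑ m ∈ Finset.range K, D.choose m * K.choose (m+1) = (D + K).choose (K - 1) := by
  rw [Nat.add_choose_eq, Finset.Nat.sum_antidiagonal_eq_sum_range_succ_mk]
  rw [show (K-1).succ = K by omega]
  apply Finset.sum_congr rfl
  intro m hm
  simp only [Finset.mem_range] at hm
  congr 1
  rw [← Nat.choose_symm (by omega : K - 1 - m ≤ K)]
  congr 1
  omega

/-- W(n,k)(1) equals the Narayana number (1/n) C(n, k-1) C(n, k). -/
theorem stmt11 (n k : ℤ) (hn : 1 ≤ n) (hk : 1 ≤ k) (hkn : k ≤ n) :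
    (W n k).eval 1 =
      (1 / (n : ℚ)) * (n.toNat.choose (k - 1).toNat : ℚ) * (n.toNat.choose k.toNat : ℚ) := by
  have hW : (W n k).eval 1 = ∑ m ∈ Finset.range (k.toNat + 1), w n k m := by
    simp [W, eval_finset_sum]
  rw [hW]
  set N := n.toNat with hN
  set K := k.toNat with hK
  have hnN : (n : ℚ) = N := by exact_mod_cast (congrArg (fun z : ℤ => (z:ℚ)) (Int.toNat_of_nonneg (by omega : (0:ℤ) ≤ n))).symm
  have hkK : (k : ℚ) = K := by exact_mod_cast (congrArg (fun z : ℤ => (z:ℚ)) (Int.toNat_of_nonneg (by omega : (0:ℤ) ≤ k))).symm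
  have hK1 : 1 ≤ K := by omega
  have hKN : K ≤ N := by omega
  rcases eq_or_lt_of_le hkn with heq | hlt
  · -- n = k
    have hNK : N = K := by omega
    have hsum : ∀ m ∈ Finset.range (K + 1), w n k m = if m = 0 then 1 else 0 := by
      intro m hm
      unfold w
      rcases Nat.eq_zero_or_pos m with h0 | h0
      · subst h0; simp [heq]
      · have : ¬ (0 < (m:ℤ) ∧ (m:ℤ) ≤ k ∧ k + (m:ℤ) ≤ n) := by omega
        rw [if_neg this, if_neg (by omega), if_neg (by omega)]
    rw [Finset.sum_congr rfl hsum]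
    simp only [Finset.sum_ite_eq', Finset.mem_range]
    rw [if_pos (by omega)]
    have h1 : (k - 1).toNat = N - 1 := by omega
    have h2 : N.choose K = 1 := by rw [hNK, Nat.choose_self]
    have h3 : N.choose (N - 1) = N := by
      rw [Nat.choose_symm (show 1 ≤ N by omega), Nat.choose_one_right]
    rw [h1, h2, h3, hnN]
    have : (N:ℚ) ≠ 0 := Nat.cast_ne_zero.mpr (by omega)
    field_simp
    norm_num
  · -- k < n
    have hKN' : K < N := by omega
    set D := (n - k - 1).toNat with hD
    have hDNK : D + K = N - 1 := by omega
    have hw : ∀ m ∈ Finset.range K, w n k (m + 1) =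
        (1 / (k : ℚ)) * (N.choose (k - 1).toNat : ℚ) * ((D.choose m : ℚ) * (K.choose (m+1) : ℚ)) := by
      intro m _
      unfold w
      by_cases hc : 0 < ((m:ℤ)+1) ∧ ((m:ℤ)+1) ≤ k ∧ k + ((m:ℤ)+1) ≤ n
      · rw [if_pos hc]
        rw [show ((m:ℤ)+1 - 1).toNat = m by omega, show ((m:ℤ)+1).toNat = m + 1 by omega]
        ring
      · rw [if_neg hc, if_neg (by omega)]
        rcases (by omega : (m:ℤ)+1 > k ∨ k + ((m:ℤ)+1) > n) with h | h
        · rw [Nat.choose_eq_zero_of_lt (show K < m+1 by omega)]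
          push_cast
          ring
        · rw [Nat.choose_eq_zero_of_lt (show D < m by omega)]
          push_cast
          ring
    rw [Finset.sum_range_succ']
    have hw0 : w n k 0 = 0 := by
      unfold w
      rw [if_neg (by omega), if_neg (by omega)]
    simp only [Nat.cast_zero]
    rw [hw0, add_zero]
    rw [Finset.sum_congr rfl (by intro m hm; push_cast; exact hw m hm)]
    rw [← Finset.mul_sum]
    have hv : ∑ m ∈ Finset.range K, ((D.choose m : ℚ) * (K.choose (m+1) : ℚ)) =
        ((N-1).choose (K-1) : ℚ) := by
      rw [← hDNK, ← vmonde D K hK1]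
      push_cast
      rfl
    rw [hv, hkK, hnN, show (k-1).toNat = K - 1 by omega]
    have key : (N:ℚ) * ((N-1).choose (K-1)) = (N.choose K) * K := by
      have := Nat.add_one_mul_choose_eq (N-1) (K-1)
      rw [show N-1+1 = N by omega, show K-1+1 = K by omega] at this
      exact_mod_cast this
    have hN0 : (N:ℚ) ≠ 0 := Nat.cast_ne_zero.mpr (by omega)
    have hK0 : (K:ℚ) ≠ 0 := Nat.cast_ne_zero.mpr (by omega)
    field_simp
    linear_combination (N.choose (K-1) : ℚ) * key
end

section
/- For all integers n, k with 1 ≤ k ≤ n-1, the polynomials W(n,k)(x) and W(n,n-k)(x) have the same set of real zeros. Concretely, for every real number r, W(n,k)(r) = 0 if and only if W(n,n-k)(r) = 0, where W(n,k)(x) = Σ_{m=0}^{k} w(n,k,m)x^m and w(n,k,m) = (1/k)*C(n,k-1)*C(n-k-1,m-1)*C(k,m) for 0 < m ≤ k, k+m ≤ n (with w(n,k,0)=1 if n=k and 0 otherwise). -/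
open Polynomial

lemma key_nat (a b μ : ℕ) :
    (a + 1) * a.choose μ * (b + 1).choose (μ + 1)
      = (b + 1) * b.choose μ * (a + 1).choose (μ + 1) := by
  have h1 := Nat.add_one_mul_choose_eq a μ
  have h2 := Nat.add_one_mul_choose_eq b μ
  calc (a + 1) * a.choose μ * (b + 1).choose (μ + 1)
      = ((a + 1).choose (μ + 1) * (μ + 1)) * (b + 1).choose (μ + 1) := by rw [h1]
    _ = ((b + 1) * b.choose μ) * (a + 1).choose (μ + 1) := by rw [h2]; ring

lemma w_coeff (n k : ℤ) (hk : 1 ≤ k) (hkn : k ≤ n - 1) (m : ℕ) :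
    w n (n - k) m
      = ((n.toNat.choose (k + 1).toNat : ℚ) / (n.toNat.choose (k - 1).toNat))
          * w n k m := by
  obtain ⟨a, ha⟩ : ∃ a : ℕ, k = (a : ℤ) + 1 := ⟨(k - 1).toNat, by omega⟩
  obtain ⟨b, hb⟩ : ∃ b : ℕ, n = (a : ℤ) + (b : ℤ) + 2 := ⟨(n - k - 1).toNat, by omega⟩
  subst ha hb
  by_cases hm : 0 < (m : ℤ) ∧ (m : ℤ) ≤ (a : ℤ) + 1 ∧ ((a : ℤ) + 1) + m ≤ (a : ℤ) + (b : ℤ) + 2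
  · obtain ⟨μ, hμ⟩ : ∃ μ : ℕ, m = μ + 1 := ⟨m - 1, by omega⟩
    subst hμ
    have cond2 : 0 < ((μ : ℤ) + 1) ∧ ((μ : ℤ) + 1) ≤ (a : ℤ) + (b : ℤ) + 2 - ((a : ℤ) + 1) ∧
        ((a : ℤ) + (b : ℤ) + 2 - ((a : ℤ) + 1)) + ((μ : ℤ) + 1) ≤ (a : ℤ) + (b : ℤ) + 2 := by
      push_cast at hm ⊢; omega
    rw [w, w]
    push_cast at hm ⊢
    rw [if_pos cond2, if_pos hm]
    have e1 : ((a : ℤ) + (b : ℤ) + 2).toNat = a + b + 2 := by omega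
    have e2 : ((a : ℤ) + (b : ℤ) + 2 - ((a : ℤ) + 1) - 1).toNat = b := by omega
    have e4 : ((a : ℤ) + (b : ℤ) + 2 - ((a : ℤ) + 1)).toNat = b + 1 := by omega
    have e5 : (((μ : ℤ) + 1) - 1).toNat = μ := by omega
    have e6 : ((μ : ℤ) + 1).toNat = μ + 1 := by omega
    have e7 : (((a : ℤ) + 1) - 1).toNat = a := by omega
    have e8 : ((a : ℤ) + 1).toNat = a + 1 := by omega
    have e11 : (((a : ℤ) + 1) + 1).toNat = a + 2 := by omega
    -- the term C((n-(n-k)-1).toNat, μ) : n - (n-k) - 1 = k - 1 = a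
    have e12 : ((a : ℤ) + (b : ℤ) + 2 - ((a : ℤ) + (b : ℤ) + 2 - ((a : ℤ) + 1)) - 1).toNat = a := by
      omega
    rw [e1, e2, e4, e5, e6, e7, e8, e11, e12]
    have hsymm2 : (a + b + 2).choose (a + 2) = (a + b + 2).choose b := by
      have h := Nat.choose_symm (show a + 2 ≤ a + b + 2 by omega)
      have h' : a + b + 2 - (a + 2) = b := by omega
      rw [h'] at h
      exact h.symm
    have hden : (0 : ℚ) < ((a + b + 2).choose a : ℚ) := by
      exact_mod_cast Nat.choose_pos (by omega)
    have hkey := key_nat a b μ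
    have hkey2 : ((a : ℚ) + 1) * a.choose μ * (b + 1).choose (μ + 1)
        = ((b : ℚ) + 1) * b.choose μ * (a + 1).choose (μ + 1) := by
      exact_mod_cast congrArg (fun x : ℕ => (x : ℚ)) hkey
    have ha1 : ((a : ℚ) + 1) ≠ 0 := by positivity
    have hb1 : ((b : ℚ) + 1) ≠ 0 := by positivity
    have ha1' : (1 + (a : ℚ)) ≠ 0 := by positivity
    have hb1' : (1 + (b : ℚ)) ≠ 0 := by positivity
    have hNa : ((a + b + 2).choose a : ℚ) ≠ 0 := ne_of_gt hden
    rw [hsymm2, show (a:ℚ)+(b:ℚ)+2-((a:ℚ)+1) = (b:ℚ)+1 from by ring]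
    field_simp
    linear_combination (((a + b + 2).choose b : ℚ)) * hkey2
  · have hm2 : ¬ (0 < (m : ℤ) ∧ (m : ℤ) ≤ (a : ℤ) + (b : ℤ) + 2 - ((a : ℤ) + 1) ∧
        ((a : ℤ) + (b : ℤ) + 2 - ((a : ℤ) + 1)) + m ≤ (a : ℤ) + (b : ℤ) + 2) := by omega
    rw [w, w, if_neg hm2, if_neg hm]
    have h1 : ¬ ((m : ℤ) = 0 ∧ (a : ℤ) + (b : ℤ) + 2 = (a : ℤ) + (b : ℤ) + 2 - ((a : ℤ) + 1)) := by
      omega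
    have h2 : ¬ ((m : ℤ) = 0 ∧ (a : ℤ) + (b : ℤ) + 2 = (a : ℤ) + 1) := by omega
    rw [if_neg h1, if_neg h2, mul_zero]

lemma w_zero_of_gt (n k : ℤ) (hk : 1 ≤ k) (m : ℕ) (hm : k < (m : ℤ)) : w n k m = 0 := by
  rw [w, if_neg (by omega), if_neg (by omega)]

lemma W_ext (n k : ℤ) (hk : 1 ≤ k) (hkn : k ≤ n) :
    W n k = ∑ m ∈ Finset.range (n.toNat + 1), Polynomial.C (w n k m) * X ^ m := by
  rw [W]
  apply Finset.sum_subset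
  · apply Finset.range_subset_range.2; omega
  · intro m _ hm
    simp only [Finset.mem_range, not_lt] at hm
    rw [w_zero_of_gt n k hk m (by omega), map_zero, zero_mul]

/-- For 1 ≤ k ≤ n-1, W(n,k) and W(n,n-k) have the same real zeros. -/
theorem stmt12 (n k : ℤ) (hk : 1 ≤ k) (hkn : k ≤ n - 1) (r : ℝ) :
    Polynomial.aeval r (W n k) = 0 ↔ Polynomial.aeval r (W n (n - k)) = 0 := by
  set c : ℚ := (n.toNat.choose (k + 1).toNat : ℚ) / (n.toNat.choose (k - 1).toNat) with hc
  have hc0 : c ≠ 0 := by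
    have h1 : 0 < n.toNat.choose (k + 1).toNat := Nat.choose_pos (by omega)
    have h2 : 0 < n.toNat.choose (k - 1).toNat := Nat.choose_pos (by omega)
    rw [hc]
    positivity
  have hW : W n (n - k) = Polynomial.C c * W n k := by
    rw [W_ext n (n - k) (by omega) (by omega), W_ext n k hk (by omega), Finset.mul_sum]
    refine Finset.sum_congr rfl fun m _ => ?_
    rw [w_coeff n k hk hkn m, map_mul, mul_assoc]
  rw [hW, map_mul, aeval_C, mul_eq_zero]
  have : (algebraMap ℚ ℝ) c ≠ 0 := by
    simpa using hc0
  tauto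
end

section
/- Let {F_i(x)}_{i≥0} be a sequence of real polynomials with nonnegative coefficients such that: (1) F_0 and F_1 are real-rooted with F_0 interlacing F_1 (written F_0 ≼ F_1); (2) deg F_{i+1} equals deg F_i or deg F_i + 1 for all i ≥ 0; (3) there exist real polynomials A_j(x), B_j(x) with F_{j+2}(x) = A_j(x)F_{j+1}(x) + B_j(x)F_j(x) for all j ≥ 0, and B_j(x) ≤ 0 for all real x ≤ 0. Then every F_i is real-rooted and F_i ≼ F_{i+1} for all i ≥ 0 (i.e., {F_i} is a generalized Sturm sequence). -/
open Polynomial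

/-- A real polynomial is real-rooted if its number of real roots (with multiplicity)
equals its degree, i.e. all of its complex roots are real. -/
def RealRooted (F : Polynomial ℝ) : Prop :=
  Multiset.card F.roots = F.natDegree

/-- `Interlaces G F` means `G ≼ F`: listing the zeros of the real-rooted polynomials
`F` and `G` in weakly decreasing order `α₁ ≥ α₂ ≥ ⋯` and `β₁ ≥ β₂ ≥ ⋯`, either
`deg F = deg G = n` and `βₙ ≤ αₙ ≤ βₙ₋₁ ≤ αₙ₋₁ ≤ ⋯ ≤ β₁ ≤ α₁`, or
`deg F = deg G + 1 = n` and `αₙ ≤ βₙ₋₁ ≤ αₙ₋₁ ≤ ⋯ ≤ β₁ ≤ α₁`; by convention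
constants interlace polynomials of degree at most one, and `0` interlaces and is
interlaced by every polynomial. (Below the sorted lists are ascending, so the
indices are reversed.) -/
noncomputable def Interlaces (G F : Polynomial ℝ) : Prop :=
  G = 0 ∨ F = 0 ∨ (F.natDegree ≤ 1 ∧ G.natDegree = 0) ∨
  (RealRooted F ∧ RealRooted G ∧
    (let a := F.roots.sort (· ≤ ·)
     let b := G.roots.sort (· ≤ ·)
     (F.natDegree = G.natDegree ∧ ∀ i < F.natDegree,
        b.getD i 0 ≤ a.getD i 0 ∧ (i + 1 < F.natDegree → a.getD i 0 ≤ b.getD (i + 1) 0)) ∨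
     (F.natDegree = G.natDegree + 1 ∧ ∀ i < G.natDegree,
        a.getD i 0 ≤ b.getD i 0 ∧ b.getD i 0 ≤ a.getD (i + 1) 0)))

namespace LW

/-- positive on positive reals -/
def Pos (q : Polynomial ℝ) : Prop := ∀ x : ℝ, 0 < x → 0 < q.eval x

lemma Pos.ne_zero {q : Polynomial ℝ} (h : Pos q) : q ≠ 0 := fun h0 => by
  simpa [h0] using h 1 one_pos

lemma pos_of_nonneg_coeff {q : Polynomial ℝ} (h : ∀ j, 0 ≤ q.coeff j) (hq : q ≠ 0) : Pos q := by
  intro x hx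
  rw [eval_eq_sum_range]
  apply Finset.sum_pos'
  · intro i _
    exact mul_nonneg (h i) (pow_nonneg hx.le i)
  · refine ⟨q.natDegree, Finset.self_mem_range_succ _, ?_⟩
    have hl : q.coeff q.natDegree ≠ 0 := by
      have := leadingCoeff_ne_zero.mpr hq
      rwa [leadingCoeff] at this
    exact mul_pos (lt_of_le_of_ne (h _) (Ne.symm hl)) (pow_pos hx _)

lemma Pos.leadingCoeff_pos {q : Polynomial ℝ} (h : Pos q) : 0 < q.leadingCoeff := by
  rcases Nat.eq_zero_or_pos q.natDegree with h0 | h0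
  · have : q = C (q.coeff 0) := eq_C_of_natDegree_eq_zero h0
    have h1 := h 1 one_pos
    rw [this] at h1 ⊢
    simpa [leadingCoeff] using h1
  · by_contra hle
    push_neg at hle
    have hd : 0 < q.degree := natDegree_pos_iff_degree_pos.mp h0
    have := q.tendsto_atBot_of_leadingCoeff_nonpos hd hle
    obtain ⟨x, hx1, hx2⟩ :=
      ((this.eventually (Filter.eventually_lt_atBot (0:ℝ))).and
        (Filter.eventually_gt_atTop (0:ℝ))).exists
    exact absurd (h x hx2) (not_lt.mpr hx1.le)

lemma Pos.root_nonpos {q : Polynomial ℝ} (h : Pos q) {r : ℝ} (hr : r ∈ q.roots) : r ≤ 0 := by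
  by_contra hpos
  push_neg at hpos
  have := h r hpos
  rw [isRoot_of_mem_roots hr] at this
  exact lt_irrefl _ this

lemma Pos.of_factor {q q₁ : Polynomial ℝ} {r : ℝ} (h : Pos q) (hq : q = (X - C r) * q₁)
    (hr : r ≤ 0) : Pos q₁ := by
  intro x hx
  have h1 := h x hx
  rw [hq, eval_mul] at h1
  simp only [eval_sub, eval_X, eval_C] at h1
  nlinarith

lemma realRooted_zero : RealRooted 0 := by simp [RealRooted]

lemma realRooted_of_natDegree_le_one {q : Polynomial ℝ} (h : q.natDegree ≤ 1) : RealRooted q := by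
  rcases eq_or_ne q 0 with rfl | hq
  · exact realRooted_zero
  interval_cases hd : q.natDegree
  · obtain ⟨c, rfl⟩ := natDegree_eq_zero.mp hd
    simp [RealRooted]
  · have hc1 : q.coeff 1 ≠ 0 := by
      have := leadingCoeff_ne_zero.mpr hq
      rwa [leadingCoeff, hd] at this
    have hroot : IsRoot q (-(q.coeff 0) / q.coeff 1) := by
      have hq' : q = C (q.coeff 1) * X + C (q.coeff 0) :=
        eq_X_add_C_of_natDegree_le_one (le_of_eq hd)
      rw [IsRoot]
      conv_lhs => arg 2; rw [hq']
      simp only [eval_add, eval_mul, eval_C, eval_X]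
      field_simp
      ring
    have hmem : (-(q.coeff 0) / q.coeff 1) ∈ q.roots := (mem_roots hq).mpr hroot
    have h1 : 0 < Multiset.card q.roots := Multiset.card_pos.mpr fun h0 => by simp [h0] at hmem
    have h2 : Multiset.card q.roots ≤ 1 := hd ▸ q.card_roots'
    rw [RealRooted, hd]
    omega

lemma realRooted_factor_iff {q₁ : Polynomial ℝ} (hq₁ : q₁ ≠ 0) (r : ℝ) :
    RealRooted ((X - C r) * q₁) ↔ RealRooted q₁ := by
  have hX : (X - C r : Polynomial ℝ) ≠ 0 := X_sub_C_ne_zero r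
  rw [RealRooted, RealRooted, roots_mul (mul_ne_zero hX hq₁), roots_X_sub_C,
    natDegree_mul hX hq₁, natDegree_X_sub_C]
  simp only [Multiset.card_add, Multiset.card_singleton]
  omega

section CountList

/-- key lemma: for a sorted list and a downward-closed predicate, the i-th entry satisfies P
iff i is below the count of P. -/
lemma getD_iff_lt_countP {P : ℝ → Bool} (hP : ∀ x y : ℝ, x ≤ y → P y → P x) :
    ∀ {l : List ℝ}, l.Pairwise (· ≤ ·) → ∀ {i : ℕ}, i < l.length →
      (P (l.getD i 0) ↔ i < l.countP P) := by
  intro l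
  induction l with
  | nil => intro _ i hi; simp at hi
  | cons a tl IH =>
    intro hs i hi
    rw [List.pairwise_cons] at hs
    by_cases hPa : P a
    · rw [List.countP_cons_of_pos hPa]
      cases i with
      | zero => simpa [hPa] using Nat.succ_pos _
      | succ i =>
        simp only [List.getD_cons_succ]
        rw [IH hs.2 (by simpa using hi)]
        omega
    · have htl : tl.countP P = 0 := by
        rw [List.countP_eq_zero]
        intro x hx hPx
        exact hPa (hP a x (hs.1 x hx) hPx)
      rw [List.countP_cons_of_neg hPa, htl]
      cases i with
      | zero => simpa using hPa
      | succ i =>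
        simp only [List.getD_cons_succ]
        have hi' : i < tl.length := by simpa using hi
        rw [List.getD_eq_getElem _ _ hi']
        constructor
        · intro hPx
          exact absurd (hP a _ (hs.1 _ (tl.getElem_mem hi')) hPx) hPa
        · omega

lemma countP_le_of_getD {P : ℝ → Bool} (hP : ∀ x y : ℝ, x ≤ y → P y → P x)
    {x y : List ℝ} (hx : x.Pairwise (· ≤ ·)) (hy : y.Pairwise (· ≤ ·))
    (hlen : x.length ≤ y.length)
    (hxy : ∀ i, i < x.length → i < y.length → y.getD i 0 ≤ x.getD i 0) :
    x.countP P ≤ y.countP P := by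
  by_contra hc
  push_neg at hc
  set i := y.countP P with hi
  have hix : i < x.length := lt_of_lt_of_le hc x.countP_le_length
  have hiy : i < y.length := lt_of_lt_of_le hix hlen
  have h1 : P (x.getD i 0) := (getD_iff_lt_countP hP hx hix).mpr hc
  have h2 : P (y.getD i 0) := hP _ _ (hxy i hix hiy) h1
  exact absurd ((getD_iff_lt_countP hP hy hiy).mp h2) (by omega)

lemma countP_le_succ_of_getD {P : ℝ → Bool} (hP : ∀ x y : ℝ, x ≤ y → P y → P x)
    {x y : List ℝ} (hx : x.Pairwise (· ≤ ·)) (hy : y.Pairwise (· ≤ ·))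
    (hlen : y.length ≤ x.length + 1)
    (hxy : ∀ i, i < x.length → i + 1 < y.length → x.getD i 0 ≤ y.getD (i+1) 0) :
    y.countP P ≤ x.countP P + 1 := by
  by_contra hc
  push_neg at hc
  set i := x.countP P with hi
  have hiy : i + 1 < y.length := lt_of_lt_of_le (by omega) y.countP_le_length
  have hix : i < x.length := by omega
  have h1 : P (y.getD (i+1) 0) := (getD_iff_lt_countP hP hy hiy).mpr (by omega)
  have h2 : P (x.getD i 0) := hP _ _ (hxy i hix hiy) h1
  exact absurd ((getD_iff_lt_countP hP hx hix).mp h2) (by omega)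

lemma getD_le_of_countP {x y : List ℝ} (hx : x.Pairwise (· ≤ ·)) (hy : y.Pairwise (· ≤ ·))
    (h : ∀ t : ℝ, x.countP (fun a => decide (a ≤ t)) ≤ y.countP (fun a => decide (a ≤ t)))
    {i : ℕ} (hix : i < x.length) (hiy : i < y.length) : y.getD i 0 ≤ x.getD i 0 := by
  have hP : ∀ u v : ℝ, u ≤ v → (fun a => decide (a ≤ x.getD i 0)) v →
      (fun a => decide (a ≤ x.getD i 0)) u := by
    intro u v huv hv
    simp only [decide_eq_true_eq] at hv ⊢
    linarith
  have h1 : i < x.countP (fun a => decide (a ≤ x.getD i 0)) :=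
    (getD_iff_lt_countP hP hx hix).mp (by simp)
  have h2 := (getD_iff_lt_countP hP hy hiy).mpr (lt_of_lt_of_le h1 (h _))
  simpa using h2

lemma getD_le_succ_of_countP {x y : List ℝ} (hx : x.Pairwise (· ≤ ·)) (hy : y.Pairwise (· ≤ ·))
    (h : ∀ t : ℝ, y.countP (fun a => decide (a ≤ t)) ≤ x.countP (fun a => decide (a ≤ t)) + 1)
    {i : ℕ} (hix : i < x.length) (hiy : i + 1 < y.length) : x.getD i 0 ≤ y.getD (i+1) 0 := by
  have hP : ∀ u v : ℝ, u ≤ v → (fun a => decide (a ≤ y.getD (i+1) 0)) v →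
      (fun a => decide (a ≤ y.getD (i+1) 0)) u := by
    intro u v huv hv
    simp only [decide_eq_true_eq] at hv ⊢
    linarith
  have h1 : i + 1 < y.countP (fun a => decide (a ≤ y.getD (i+1) 0)) :=
    (getD_iff_lt_countP hP hy hiy).mp (by simp)
  have h2 := (getD_iff_lt_countP hP hx hix).mpr (by have := h (y.getD (i+1) 0); omega)
  simpa using h2

end CountList

section Counts

noncomputable def cntLE (q : Polynomial ℝ) (t : ℝ) : ℕ :=
  Multiset.countP (fun a => a ≤ t) q.roots

noncomputable def cntLT (q : Polynomial ℝ) (t : ℝ) : ℕ :=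
  Multiset.countP (fun a => a < t) q.roots

lemma cntLE_eq_list (q : Polynomial ℝ) (t : ℝ) :
    cntLE q t = (q.roots.sort (· ≤ ·)).countP (fun a => decide (a ≤ t)) := by
  rw [cntLE, ← Multiset.sort_eq q.roots (· ≤ ·), Multiset.coe_countP, Multiset.sort_eq]

lemma cntLT_eq_list (q : Polynomial ℝ) (t : ℝ) :
    cntLT q t = (q.roots.sort (· ≤ ·)).countP (fun a => decide (a < t)) := by
  rw [cntLT, ← Multiset.sort_eq q.roots (· ≤ ·), Multiset.coe_countP, Multiset.sort_eq]

lemma length_sortedRoots (q : Polynomial ℝ) :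
    (q.roots.sort (· ≤ ·)).length = Multiset.card q.roots := Multiset.length_sort _

lemma sorted_sortedRoots (q : Polynomial ℝ) :
    (q.roots.sort (· ≤ ·)).Pairwise (· ≤ ·) := Multiset.pairwise_sort _ _

/-- interlacing, counting form, equal degrees: roots of G interlace roots of F -/
def Ileq (G F : Polynomial ℝ) : Prop := ∀ t : ℝ,
  cntLE F t ≤ cntLE G t ∧ cntLE G t ≤ cntLE F t + 1 ∧
  cntLT F t ≤ cntLT G t ∧ cntLT G t ≤ cntLT F t + 1

/-- interlacing, counting form, deg F = deg G + 1 -/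
def Ilt (G F : Polynomial ℝ) : Prop := ∀ t : ℝ,
  cntLE G t ≤ cntLE F t ∧ cntLE F t ≤ cntLE G t + 1 ∧
  cntLT G t ≤ cntLT F t ∧ cntLT F t ≤ cntLT G t + 1

def ILc (G F : Polynomial ℝ) : Prop :=
  (F.natDegree = G.natDegree ∧ Ileq G F) ∨ (F.natDegree = G.natDegree + 1 ∧ Ilt G F)

lemma dcLE (t : ℝ) : ∀ x y : ℝ, x ≤ y → (fun a => decide (a ≤ t)) y → (fun a => decide (a ≤ t)) x := by
  intro x y hxy h
  simp only [decide_eq_true_eq] at h ⊢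
  linarith

lemma dcLT (t : ℝ) : ∀ x y : ℝ, x ≤ y → (fun a => decide (a < t)) y → (fun a => decide (a < t)) x := by
  intro x y hxy h
  simp only [decide_eq_true_eq] at h ⊢
  linarith

lemma cntLE_le_natDegree {q : Polynomial ℝ} (hq : RealRooted q) (t : ℝ) :
    cntLE q t ≤ q.natDegree := hq ▸ Multiset.countP_le_card _ _

lemma cntLT_le_natDegree {q : Polynomial ℝ} (hq : RealRooted q) (t : ℝ) :
    cntLT q t ≤ q.natDegree := hq ▸ Multiset.countP_le_card _ _

lemma interlaces_to_ILc {G F : Polynomial ℝ} (h : Interlaces G F) (hF : RealRooted F)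
    (hG : RealRooted G) (hG0 : G ≠ 0) (hF0 : F ≠ 0) : ILc G F := by
  have hlF : (F.roots.sort (· ≤ ·)).length = F.natDegree := by rw [length_sortedRoots, hF]
  have hlG : (G.roots.sort (· ≤ ·)).length = G.natDegree := by rw [length_sortedRoots, hG]
  rcases h with h | h | ⟨hd1, hd0⟩ | ⟨_, _, hc | hc⟩
  · exact absurd h hG0
  · exact absurd h hF0
  · -- G is a nonzero constant, deg F ≤ 1
    have hGr : G.roots = 0 := by
      obtain ⟨c, rfl⟩ := natDegree_eq_zero.mp hd0
      exact roots_C c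
    have hGLE : ∀ t, cntLE G t = 0 := fun t => by rw [cntLE, hGr]; rfl
    have hGLT : ∀ t, cntLT G t = 0 := fun t => by rw [cntLT, hGr]; rfl
    interval_cases hdF : F.natDegree
    · have hFr : F.roots = 0 := by
        obtain ⟨c, rfl⟩ := natDegree_eq_zero.mp hdF
        exact roots_C c
      refine Or.inl ⟨by omega, fun t => ?_⟩
      rw [hGLE, hGLT, cntLE, cntLT, hFr]
      simp [Multiset.countP_zero]
    · refine Or.inr ⟨by omega, fun t => ?_⟩
      have h1 := cntLE_le_natDegree hF t
      have h2 := cntLT_le_natDegree hF t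
      rw [hGLE, hGLT]
      omega
  · refine Or.inl ⟨hc.1, fun t => ?_⟩
    have hb : ∀ i, i < (F.roots.sort (· ≤ ·)).length → i < (G.roots.sort (· ≤ ·)).length →
        (G.roots.sort (· ≤ ·)).getD i 0 ≤ (F.roots.sort (· ≤ ·)).getD i 0 := by
      intro i hi _
      exact (hc.2 i (by omega)).1
    have hb2 : ∀ i, i < (F.roots.sort (· ≤ ·)).length → i + 1 < (G.roots.sort (· ≤ ·)).length →
        (F.roots.sort (· ≤ ·)).getD i 0 ≤ (G.roots.sort (· ≤ ·)).getD (i+1) 0 := by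
      intro i hi hi2
      exact (hc.2 i (by omega)).2 (by omega)
    refine ⟨?_, ?_, ?_, ?_⟩
    · rw [cntLE_eq_list, cntLE_eq_list]
      exact countP_le_of_getD (dcLE t) (sorted_sortedRoots F) (sorted_sortedRoots G)
        (by omega) hb
    · rw [cntLE_eq_list, cntLE_eq_list]
      exact countP_le_succ_of_getD (dcLE t) (sorted_sortedRoots F) (sorted_sortedRoots G)
        (by omega) hb2
    · rw [cntLT_eq_list, cntLT_eq_list]
      exact countP_le_of_getD (dcLT t) (sorted_sortedRoots F) (sorted_sortedRoots G)
        (by omega) hb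
    · rw [cntLT_eq_list, cntLT_eq_list]
      exact countP_le_succ_of_getD (dcLT t) (sorted_sortedRoots F) (sorted_sortedRoots G)
        (by omega) hb2
  · refine Or.inr ⟨hc.1, fun t => ?_⟩
    have hb : ∀ i, i < (G.roots.sort (· ≤ ·)).length → i < (F.roots.sort (· ≤ ·)).length →
        (F.roots.sort (· ≤ ·)).getD i 0 ≤ (G.roots.sort (· ≤ ·)).getD i 0 := by
      intro i hi _
      exact (hc.2 i (by omega)).1
    have hb2 : ∀ i, i < (G.roots.sort (· ≤ ·)).length → i + 1 < (F.roots.sort (· ≤ ·)).length →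
        (G.roots.sort (· ≤ ·)).getD i 0 ≤ (F.roots.sort (· ≤ ·)).getD (i+1) 0 := by
      intro i hi _
      exact (hc.2 i (by omega)).2
    refine ⟨?_, ?_, ?_, ?_⟩
    · rw [cntLE_eq_list, cntLE_eq_list]
      exact countP_le_of_getD (dcLE t) (sorted_sortedRoots G) (sorted_sortedRoots F)
        (by omega) hb
    · rw [cntLE_eq_list, cntLE_eq_list]
      exact countP_le_succ_of_getD (dcLE t) (sorted_sortedRoots G) (sorted_sortedRoots F)
        (by omega) hb2
    · rw [cntLT_eq_list, cntLT_eq_list]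
      exact countP_le_of_getD (dcLT t) (sorted_sortedRoots G) (sorted_sortedRoots F)
        (by omega) hb
    · rw [cntLT_eq_list, cntLT_eq_list]
      exact countP_le_succ_of_getD (dcLT t) (sorted_sortedRoots G) (sorted_sortedRoots F)
        (by omega) hb2

lemma ILc_to_interlaces {G F : Polynomial ℝ} (hF : RealRooted F) (hG : RealRooted G)
    (h : ILc G F) : Interlaces G F := by
  have hlF : (F.roots.sort (· ≤ ·)).length = F.natDegree := by rw [length_sortedRoots, hF]
  have hlG : (G.roots.sort (· ≤ ·)).length = G.natDegree := by rw [length_sortedRoots, hG]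
  refine Or.inr (Or.inr (Or.inr ⟨hF, hG, ?_⟩))
  rcases h with ⟨hd, hc⟩ | ⟨hd, hc⟩
  · refine Or.inl ⟨hd, fun i hi => ⟨?_, fun hi2 => ?_⟩⟩
    · refine getD_le_of_countP (sorted_sortedRoots F) (sorted_sortedRoots G)
        (fun t => ?_) (by omega) (by omega)
      have := (hc t).1
      rwa [cntLE_eq_list, cntLE_eq_list] at this
    · refine getD_le_succ_of_countP (sorted_sortedRoots F) (sorted_sortedRoots G)
        (fun t => ?_) (by omega) (by omega)
      have := (hc t).2.1
      rwa [cntLE_eq_list, cntLE_eq_list] at this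
  · refine Or.inr ⟨hd, fun i hi => ⟨?_, ?_⟩⟩
    · refine getD_le_of_countP (sorted_sortedRoots G) (sorted_sortedRoots F)
        (fun t => ?_) (by omega) (by omega)
      have := (hc t).1
      rwa [cntLE_eq_list, cntLE_eq_list] at this
    · refine getD_le_succ_of_countP (sorted_sortedRoots G) (sorted_sortedRoots F)
        (fun t => ?_) (by omega) (by omega)
      have := (hc t).2.1
      rwa [cntLE_eq_list, cntLE_eq_list] at this

end Counts

section Shift

lemma roots_factor {q₁ : Polynomial ℝ} (hq₁ : q₁ ≠ 0) (r : ℝ) :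
    ((X - C r) * q₁).roots = r ::ₘ q₁.roots := by
  rw [roots_mul (mul_ne_zero (X_sub_C_ne_zero r) hq₁), roots_X_sub_C,
    ← Multiset.singleton_add]

lemma natDegree_factor {q₁ : Polynomial ℝ} (hq₁ : q₁ ≠ 0) (r : ℝ) :
    ((X - C r) * q₁).natDegree = q₁.natDegree + 1 := by
  rw [natDegree_mul (X_sub_C_ne_zero r) hq₁, natDegree_X_sub_C]
  omega

lemma cntLE_factor {q₁ : Polynomial ℝ} (hq₁ : q₁ ≠ 0) (r t : ℝ) :
    cntLE ((X - C r) * q₁) t = cntLE q₁ t + if r ≤ t then 1 else 0 := by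
  rw [cntLE, cntLE, roots_factor hq₁, Multiset.countP_cons]

lemma cntLT_factor {q₁ : Polynomial ℝ} (hq₁ : q₁ ≠ 0) (r t : ℝ) :
    cntLT ((X - C r) * q₁) t = cntLT q₁ t + if r < t then 1 else 0 := by
  rw [cntLT, cntLT, roots_factor hq₁, Multiset.countP_cons]

lemma ILc_factor {G F : Polynomial ℝ} (hG : G ≠ 0) (hF : F ≠ 0) (r : ℝ)
    (h : ILc G F) : ILc ((X - C r) * G) ((X - C r) * F) := by
  rcases h with ⟨hd, hc⟩ | ⟨hd, hc⟩
  · refine Or.inl ⟨by rw [natDegree_factor hG, natDegree_factor hF, hd], fun t => ?_⟩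
    have := hc t
    rw [cntLE_factor hG, cntLE_factor hF, cntLT_factor hG, cntLT_factor hF]
    split_ifs <;> omega
  · refine Or.inr ⟨by rw [natDegree_factor hG, natDegree_factor hF, hd], fun t => ?_⟩
    have := hc t
    rw [cntLE_factor hG, cntLE_factor hF, cntLT_factor hG, cntLT_factor hF]
    split_ifs <;> omega

lemma ILc_unfactor {G F : Polynomial ℝ} (hG : G ≠ 0) (hF : F ≠ 0) (r : ℝ)
    (h : ILc ((X - C r) * G) ((X - C r) * F)) : ILc G F := by
  rcases h with ⟨hd, hc⟩ | ⟨hd, hc⟩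
  · rw [natDegree_factor hG, natDegree_factor hF] at hd
    refine Or.inl ⟨by omega, fun t => ?_⟩
    have := hc t
    rw [cntLE_factor hG, cntLE_factor hF, cntLT_factor hG, cntLT_factor hF] at this
    split_ifs at this <;> omega
  · rw [natDegree_factor hG, natDegree_factor hF] at hd
    refine Or.inr ⟨by omega, fun t => ?_⟩
    have := hc t
    rw [cntLE_factor hG, cntLE_factor hF, cntLT_factor hG, cntLT_factor hF] at this
    split_ifs at this <;> omega

lemma countP_split (s : Multiset ℝ) (r : ℝ) :
    s.countP (fun a => a ≤ r) = s.countP (fun a => a < r) + s.count r := by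
  induction s using Multiset.induction_on with
  | empty => simp
  | cons a s IH =>
    rw [Multiset.countP_cons, Multiset.countP_cons, Multiset.count_cons, IH]
    rcases lt_trichotomy a r with h | h | h
    · simp only [if_pos h.le, if_pos h, if_neg (by exact fun he => absurd he h.ne')]
      omega
    · subst h
      simp only [if_pos le_rfl, if_neg (lt_irrefl a), eq_self_iff_true, if_true]
      omega
    · simp only [if_neg (not_le.mpr h), if_neg (not_lt.mpr h.le),
        if_neg (by exact fun he => absurd he h.ne)]
      omega

lemma cnt_split (q : Polynomial ℝ) (r : ℝ) :
    cntLE q r = cntLT q r + q.roots.count r := countP_split _ _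

/-- a multiple root of F is a root of G when the roots of G interlace those of F -/
lemma common_root_of_multiple {G F : Polynomial ℝ} (h : ILc G F) {r : ℝ}
    (h2 : 2 ≤ F.roots.count r) : r ∈ G.roots := by
  rw [← Multiset.count_pos]
  have hsF := cnt_split F r
  have hsG := cnt_split G r
  rcases h with ⟨_, hc⟩ | ⟨_, hc⟩
  · obtain ⟨c1, c2, c3, c4⟩ := hc r
    omega
  · obtain ⟨c1, c2, c3, c4⟩ := hc r
    omega

end Shift

section Sign

lemma eval_sign {q : Polynomial ℝ} (hq : RealRooted q) (hl : 0 < q.leadingCoeff) {ρ : ℝ}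
    (hρ : ρ ∉ q.roots) :
    0 < q.eval ρ * (-1 : ℝ) ^ (Multiset.countP (fun a => ρ < a) q.roots) := by
  have hfact := C_leadingCoeff_mul_prod_multiset_X_sub_C (p := q) hq
  set s := q.roots with hs
  have heval : q.eval ρ = q.leadingCoeff * ((s.map fun a => ρ - a)).prod := by
    conv_lhs => rw [← hfact]
    rw [eval_mul, eval_C, eval_multiset_prod, Multiset.map_map]
    congr 2
    apply Multiset.map_congr rfl
    intro x _
    simp
  have hsplit : s.filter (fun a => ρ < a) + s.filter (fun a => ¬ ρ < a) = s :=
    Multiset.filter_add_not _ s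
  set s₁ := s.filter (fun a => ρ < a) with hs₁
  set s₂ := s.filter (fun a => ¬ ρ < a) with hs₂
  have hmap : (s.map fun a => ρ - a).prod
      = (s₁.map fun a => ρ - a).prod * (s₂.map fun a => ρ - a).prod := by
    rw [← Multiset.prod_add, ← Multiset.map_add, hsplit]
  -- second product is positive
  have hp2 : 0 < (s₂.map fun a => ρ - a).prod := by
    apply Multiset.prod_pos
    intro x hx
    obtain ⟨a, ha, rfl⟩ := Multiset.mem_map.mp hx
    have ha' := Multiset.mem_filter.mp ha
    have hne : a ≠ ρ := fun he => hρ (he ▸ ha'.1)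
    have : a < ρ := lt_of_le_of_ne (not_lt.mp ha'.2) hne
    linarith
  -- first product is (-1)^k times a positive number
  have hp1 : (s₁.map fun a => ρ - a).prod
      = (-1 : ℝ) ^ (Multiset.card s₁) * (s₁.map fun a => a - ρ).prod := by
    have : (s₁.map fun a => ρ - a) = (s₁.map fun a => a - ρ).map Neg.neg := by
      rw [Multiset.map_map]
      apply Multiset.map_congr rfl
      intro x _
      simp
    rw [this, Multiset.prod_map_neg, Multiset.card_map]
  have hp1' : 0 < (s₁.map fun a => a - ρ).prod := by
    apply Multiset.prod_pos
    intro x hx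
    obtain ⟨a, ha, rfl⟩ := Multiset.mem_map.mp hx
    have ha' := Multiset.mem_filter.mp ha
    linarith [ha'.2]
  have hk : Multiset.countP (fun a => ρ < a) s = Multiset.card s₁ := by
    rw [Multiset.countP_eq_card_filter]
  rw [heval, hmap, hp1, hk]
  have hone : (-1 : ℝ) ^ (Multiset.card s₁) * (-1 : ℝ) ^ (Multiset.card s₁) = 1 := by
    rw [← mul_pow]
    norm_num
  nlinarith [mul_pos (mul_pos hl hp1') hp2]

end Sign

section Pick

lemma exists_root_Ioc {h : Polynomial ℝ} {u v : ℝ} (huv : u ≤ v) (hu : h.eval u < 0)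
    (hv : 0 ≤ h.eval v) : ∃ γ, γ ∈ Set.Ioc u v ∧ h.eval γ = 0 := by
  have hcont : ContinuousOn (fun x => h.eval x) (Set.Icc u v) :=
    h.continuous.continuousOn
  have hsub := intermediate_value_Ioc huv hcont
  have h0 : (0:ℝ) ∈ Set.Ioc (h.eval u) (h.eval v) := ⟨hu, hv⟩
  obtain ⟨γ, hγmem, hγ⟩ := hsub h0
  exact ⟨γ, hγmem, hγ⟩

lemma pick {h : Polynomial ℝ} {u v : ℝ} (huv : u < v) (hu : h.eval u ≤ 0)
    (hv : 0 ≤ h.eval v) :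
    ∃ γ h₁, u ≤ γ ∧ γ ≤ v ∧ h = (X - C γ) * h₁ ∧ 0 ≤ h₁.eval u := by
  rcases hu.lt_or_eq with hu' | hu'
  · obtain ⟨γ, hγmem, hγ⟩ := exists_root_Ioc huv.le hu' hv
    obtain ⟨h₁, hfac⟩ := dvd_iff_isRoot.mpr hγ
    refine ⟨γ, h₁, hγmem.1.le, hγmem.2, hfac, ?_⟩
    have he : h.eval u = (u - γ) * h₁.eval u := by
      rw [hfac]; simp
    have : u - γ < 0 := by linarith [hγmem.1]
    nlinarith
  · obtain ⟨q₀, hfac⟩ := dvd_iff_isRoot.mpr hu'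
    by_cases hq₀ : 0 ≤ q₀.eval u
    · exact ⟨u, q₀, le_rfl, huv.le, hfac, hq₀⟩
    · push_neg at hq₀
      have hq₀v : 0 ≤ q₀.eval v := by
        have he : h.eval v = (v - u) * q₀.eval v := by rw [hfac]; simp
        nlinarith
      obtain ⟨γ, hγmem, hγ⟩ := exists_root_Ioc huv.le hq₀ hq₀v
      obtain ⟨r, hr⟩ := dvd_iff_isRoot.mpr hγ
      refine ⟨γ, (X - C u) * r, hγmem.1.le, hγmem.2, by rw [hfac, hr]; ring, by simp⟩

lemma sigma_lt {σ : ℕ → ℝ} {M : ℕ} (h : ∀ i, i < M → σ i < σ (i+1)) :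
    ∀ i j, i < j → j ≤ M → σ i < σ j := by
  intro i j
  induction j with
  | zero => omega
  | succ j IH =>
    intro hij hj
    rcases Nat.lt_or_ge i j with hlt | hge
    · exact lt_trans (IH hlt (by omega)) (h j (by omega))
    · have : i = j := by omega
      subst this
      exact h i (by omega)

lemma sigma_le {σ : ℕ → ℝ} {M : ℕ} (h : ∀ i, i < M → σ i < σ (i+1)) :
    ∀ i j, i ≤ j → j ≤ M → σ i ≤ σ j := by
  intro i j hij hj
  rcases eq_or_lt_of_le hij with rfl | hlt
  · exact le_rfl
  · exact (sigma_lt h i j hlt hj).le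

lemma neg_one_pow_mul_nonneg_cancel {k : ℕ} {c y : ℝ} (hc : 0 < c)
    (h : 0 ≤ (-1:ℝ)^k * (c * y)) : 0 ≤ (-1:ℝ)^k * y := by
  rcases Nat.even_or_odd k with he | ho
  · rw [he.neg_one_pow] at h ⊢
    nlinarith
  · rw [ho.neg_one_pow] at h ⊢
    nlinarith

lemma lemB : ∀ (m : ℕ), 1 ≤ m → ∀ (h : Polynomial ℝ), h ≠ 0 → ∀ (σ : ℕ → ℝ),
    (∀ i, i < m → σ i < σ (i+1)) →
    (∀ i, i ≤ m → 0 ≤ (-1:ℝ)^(m-i) * h.eval (σ i)) →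
    ∃ (γ : List ℝ) (q : Polynomial ℝ), γ.length = m ∧ γ.Pairwise (· ≤ ·) ∧
      h = (γ.map fun r => X - C r).prod * q ∧
      (∀ i, i < m → σ i ≤ γ.getD i 0 ∧ γ.getD i 0 ≤ σ (i+1)) ∧
      0 ≤ q.eval (σ 0) := by
  intro m hm
  induction m, hm using Nat.le_induction with
  | base =>
    intro h hne σ hσ hsign
    have h0 : h.eval (σ 0) ≤ 0 := by
      have := hsign 0 (by omega)
      simp only [Nat.sub_zero, pow_one] at this
      linarith
    have h1 : 0 ≤ h.eval (σ 1) := by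
      have := hsign 1 (by omega)
      simpa using this
    obtain ⟨γ, h₁, hγ1, hγ2, hfac, heval⟩ := pick (hσ 0 (by omega)) h0 h1
    refine ⟨[γ], h₁, rfl, List.pairwise_singleton _ γ, by simpa using hfac, ?_, heval⟩
    intro i hi
    interval_cases i
    exact ⟨hγ1, hγ2⟩
  | succ m hm IH =>
    intro h hne σ hσ hsign
    have h0 : h.eval (σ m) ≤ 0 := by
      have := hsign m (by omega)
      have h1m : m + 1 - m = 1 := by omega
      rw [h1m, pow_one] at this
      linarith
    have h1 : 0 ≤ h.eval (σ (m+1)) := by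
      have := hsign (m+1) (by omega)
      simpa using this
    obtain ⟨γtop, h₁, hγ1, hγ2, hfac, heval⟩ := pick (hσ m (by omega)) h0 h1
    have hne₁ : h₁ ≠ 0 := by
      intro h0'
      rw [h0', mul_zero] at hfac
      exact hne hfac
    have hsign₁ : ∀ i, i ≤ m → 0 ≤ (-1:ℝ)^(m-i) * h₁.eval (σ i) := by
      intro i hi
      rcases eq_or_lt_of_le hi with rfl | hlt
      · simpa using heval
      · have hs := hsign i (by omega)
        have hpow : m + 1 - i = (m - i) + 1 := by omega
        rw [hpow, pow_succ] at hs
        have hev : h.eval (σ i) = (σ i - γtop) * h₁.eval (σ i) := by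
          rw [hfac]; simp
        have hlt' : σ i < γtop := lt_of_lt_of_le (sigma_lt hσ i m hlt (by omega)) hγ1
        have hc : 0 < γtop - σ i := by linarith
        apply neg_one_pow_mul_nonneg_cancel hc
        have : (-1:ℝ)^(m-i) * ((γtop - σ i) * h₁.eval (σ i))
            = (-1:ℝ)^(m-i) * (-1) * h.eval (σ i) := by
          rw [hev]; ring
        rw [this]
        exact hs
    obtain ⟨γ', q, hlen, hsort, hfac', hbounds, heval0⟩ :=
      IH h₁ hne₁ σ (fun i hi => hσ i (by omega)) hsign₁
    refine ⟨γ' ++ [γtop], q, by simp [hlen], ?_, ?_, ?_, heval0⟩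
    · refine List.pairwise_append.mpr ⟨hsort, List.pairwise_singleton _ _, ?_⟩
      intro x hx y hy
      rw [List.mem_singleton.mp hy]
      obtain ⟨j, hj, rfl⟩ := List.mem_iff_getElem.mp hx
      have hj' : j < m := by omega
      have : γ'.getD j 0 ≤ σ (j+1) := (hbounds j hj').2
      rw [List.getD_eq_getElem _ _ hj] at this
      calc γ'[j] ≤ σ (j+1) := this
        _ ≤ σ m := sigma_le (fun i hi => hσ i (by omega)) (j+1) m (by omega) le_rfl
        _ ≤ γtop := hγ1
    · rw [List.map_append, List.prod_append]
      simp only [List.map_cons, List.map_nil, List.prod_cons, List.prod_nil, mul_one]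
      rw [hfac, hfac']
      ring
    · intro i hi
      rcases Nat.lt_or_ge i m with hlt | hge
      · rw [List.getD_append _ _ _ _ (by omega)]
        exact hbounds i hlt
      · have him : i = m := by omega
        subst him
        have hgd : (γ' ++ [γtop]).getD i 0 = γtop := by
          rw [List.getD_eq_getElem _ _ (by simp [hlen])]
          rw [List.getElem_append_right (by omega)]
          simp [hlen]
        rw [hgd]
        exact ⟨hγ1, hγ2⟩

end Pick

section Helpers

lemma getD_mem {l : List ℝ} {i : ℕ} (hi : i < l.length) : l.getD i 0 ∈ l := by
  rw [List.getD_eq_getElem _ _ hi]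
  exact l.getElem_mem hi

lemma sorted_nodup_strict {l : List ℝ} (hs : l.Pairwise (· ≤ ·)) (hn : l.Nodup) {j k : ℕ}
    (hjk : j < k) (hk : k < l.length) : l.getD j 0 < l.getD k 0 := by
  have hj : j < l.length := by omega
  rw [List.getD_eq_getElem _ _ hj, List.getD_eq_getElem _ _ hk]
  have hle : l[j] ≤ l[k] := by
    have := hs.rel_get_of_lt (a := ⟨j, hj⟩) (b := ⟨k, hk⟩) (by simpa using hjk)
    simpa using this
  have hne : l[j] ≠ l[k] := fun he => by
    have := (hn.getElem_inj_iff).mp he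
    omega
  exact lt_of_le_of_ne hle hne

/-- counts of a polynomial with distinct roots evaluated at its i-th smallest root -/
lemma cnt_at_root {f : Polynomial ℝ} (hnodup : f.roots.Nodup) {i : ℕ}
    (hi : i < (f.roots.sort (· ≤ ·)).length) :
    cntLE f ((f.roots.sort (· ≤ ·)).getD i 0) = i + 1 ∧
    cntLT f ((f.roots.sort (· ≤ ·)).getD i 0) = i := by
  set l := f.roots.sort (· ≤ ·) with hl
  have hsort : l.Pairwise (· ≤ ·) := sorted_sortedRoots f
  have hnod : l.Nodup := by
    have : (↑l : Multiset ℝ) = f.roots := Multiset.sort_eq _ _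
    rw [← Multiset.coe_nodup (l := l)]
    rw [this]
    exact hnodup
  set t := l.getD i 0 with ht
  constructor
  · rw [cntLE_eq_list, ← hl]
    have hge : i < l.countP (fun a => decide (a ≤ t)) :=
      (getD_iff_lt_countP (dcLE t) hsort hi).mp (decide_eq_true (le_of_eq ht.symm))
    have hle : l.countP (fun a => decide (a ≤ t)) ≤ i + 1 := by
      by_contra hc
      push_neg at hc
      have hi1 : i + 1 < l.length := lt_of_lt_of_le hc l.countP_le_length
      have := (getD_iff_lt_countP (dcLE t) hsort hi1).mpr (by omega)
      simp only [decide_eq_true_eq] at this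
      exact absurd this (not_le.mpr (sorted_nodup_strict hsort hnod (by omega) hi1))
    omega
  · rw [cntLT_eq_list, ← hl]
    have hle : l.countP (fun a => decide (a < t)) ≤ i := by
      by_contra hc
      push_neg at hc
      have := (getD_iff_lt_countP (dcLT t) hsort hi).mpr (by omega)
      simp only [decide_eq_true_eq] at this
      exact absurd this (lt_irrefl t)
    have hge : i ≤ l.countP (fun a => decide (a < t)) := by
      by_contra hc
      push_neg at hc
      set j := l.countP (fun a => decide (a < t)) with hj
      have hjl : j < l.length := by omega
      have := (getD_iff_lt_countP (dcLT t) hsort hjl).mp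
      have hnP : ¬ (decide (l.getD j 0 < t) = true) := by
        intro hP
        have := (getD_iff_lt_countP (dcLT t) hsort hjl).mp hP
        omega
      simp only [decide_eq_true_eq, not_lt] at hnP
      exact absurd (sorted_nodup_strict hsort hnod (show j < i by omega) hi) (not_lt.mpr hnP)
    omega

lemma listProd_facts (γ : List ℝ) :
    ((γ.map fun r => X - C r).prod).Monic ∧
    ((γ.map fun r => X - C r).prod).natDegree = γ.length ∧
    ((γ.map fun r => X - C r).prod).roots = (↑γ : Multiset ℝ) := by
  have hcoe : (γ.map fun r => X - C r).prod = ((↑γ : Multiset ℝ).map fun r => X - C r).prod := by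
    rw [Multiset.map_coe, Multiset.prod_coe]
  rw [hcoe]
  refine ⟨monic_multiset_prod_of_monic _ _ (fun a _ => monic_X_sub_C a), ?_,
    roots_multiset_prod_X_sub_C _⟩
  rw [natDegree_multiset_prod_X_sub_C_eq_card, Multiset.coe_card]

lemma countP_not_le (s : Multiset ℝ) (t : ℝ) :
    s.countP (fun a => a ≤ t) + s.countP (fun a => t < a) = Multiset.card s := by
  have : s.countP (fun a => t < a) = s.countP (fun a => ¬ a ≤ t) := by
    apply Multiset.countP_congr rfl
    intro x _
    simp [not_le]
  rw [this, Multiset.countP_eq_card_filter, Multiset.countP_eq_card_filter,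
    ← Multiset.card_add, Multiset.filter_add_not]

end Helpers

section Main

lemma main' : ∀ (n : ℕ) (f p a b h : Polynomial ℝ),
    f.natDegree = n →
    Pos f → (p = 0 ∨ Pos p) → (h = 0 ∨ Pos h) →
    RealRooted f → RealRooted p → Interlaces p f →
    h = a * f + b * p →
    (∀ x : ℝ, x ≤ 0 → b.eval x ≤ 0) →
    (h.natDegree = f.natDegree ∨ h.natDegree = f.natDegree + 1) →
    RealRooted h ∧ Interlaces f h := by
  intro n
  induction n using Nat.strong_induction_on with
  | _ n IH =>
  intro f p a b h hn hPf hPp hPh hRf hRp hIpf hrec hb hdeg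
  rcases hPh with rfl | hPh
  · exact ⟨realRooted_zero, Or.inr (Or.inl rfl)⟩
  have hh0 : h ≠ 0 := hPh.ne_zero
  have hf0 : f ≠ 0 := hPf.ne_zero
  -- case p = 0 : h = a * f with deg a ≤ 1
  rcases hPp with rfl | hPp
  · have hrec' : h = a * f := by rw [hrec]; ring
    have ha0 : a ≠ 0 := by
      intro h0
      rw [hrec', h0, zero_mul] at hh0
      exact hh0 rfl
    have hdm : h.natDegree = a.natDegree + f.natDegree := hrec' ▸ natDegree_mul ha0 hf0
    have hdega : a.natDegree ≤ 1 := by omega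
    have hRa : RealRooted a := realRooted_of_natDegree_le_one hdega
    have hroots : h.roots = a.roots + f.roots := by
      rw [hrec', roots_mul (hrec' ▸ hh0)]
    have hRh : RealRooted h := by
      rw [RealRooted, hroots, Multiset.card_add, hRa, hRf, hdm]
    refine ⟨hRh, ILc_to_interlaces hRh hRf ?_⟩
    have hcntLE : ∀ t, cntLE h t = cntLE f t + Multiset.countP (fun x => x ≤ t) a.roots := by
      intro t
      rw [cntLE, cntLE, hroots, Multiset.countP_add]
      omega
    have hcntLT : ∀ t, cntLT h t = cntLT f t + Multiset.countP (fun x => x < t) a.roots := by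
      intro t
      rw [cntLT, cntLT, hroots, Multiset.countP_add]
      omega
    have hcard : Multiset.card a.roots = a.natDegree := hRa
    rcases Nat.lt_or_ge a.natDegree 1 with h1 | h1
    · -- constant a
      have hr0 : a.roots = 0 := Multiset.card_eq_zero.mp (by omega)
      refine Or.inl ⟨by omega, fun t => ?_⟩
      rw [hcntLE, hcntLT, hr0]
      simp
    · -- linear a
      have ha1 : a.natDegree = 1 := by omega
      refine Or.inr ⟨by omega, fun t => ?_⟩
      have h2 : Multiset.countP (fun x => x ≤ t) a.roots ≤ 1 :=
        le_trans (Multiset.countP_le_card _ _) (by omega)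
      have h3 : Multiset.countP (fun x => x < t) a.roots ≤ 1 :=
        le_trans (Multiset.countP_le_card _ _) (by omega)
      have := hcntLE t
      have := hcntLT t
      omega
  -- now p ≠ 0
  have hp0 : p ≠ 0 := hPp.ne_zero
  have hILpf : ILc p f := interlaces_to_ILc hIpf hRf hRp hp0 hf0
  -- case n = 0
  rcases Nat.eq_zero_or_pos n with rfl | hnpos
  · have hdh : h.natDegree ≤ 1 := by omega
    refine ⟨realRooted_of_natDegree_le_one hdh, ILc_to_interlaces
      (realRooted_of_natDegree_le_one hdh) hRf ?_⟩
    have hfr : f.roots = 0 := Multiset.card_eq_zero.mp (by rw [hRf]; omega)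
    have hcf : ∀ t, cntLE f t = 0 ∧ cntLT f t = 0 := by
      intro t
      rw [cntLE, cntLT, hfr]
      simp
    have hch : ∀ t, cntLE h t ≤ h.natDegree ∧ cntLT h t ≤ h.natDegree := fun t =>
      ⟨le_trans (Multiset.countP_le_card _ _) ((realRooted_of_natDegree_le_one hdh) ▸ le_rfl),
       le_trans (Multiset.countP_le_card _ _) ((realRooted_of_natDegree_le_one hdh) ▸ le_rfl)⟩
    rcases hdeg with hd | hd
    · refine Or.inl ⟨hd, fun t => ?_⟩
      obtain ⟨e1, e2⟩ := hcf t
      obtain ⟨e3, e4⟩ := hch t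
      omega
    · refine Or.inr ⟨hd, fun t => ?_⟩
      obtain ⟨e1, e2⟩ := hcf t
      obtain ⟨e3, e4⟩ := hch t
      omega
  -- common root case
  by_cases hcom : ∃ r, r ∈ f.roots ∧ r ∈ p.roots
  · obtain ⟨r, hrf, hrp⟩ := hcom
    have hr0 : r ≤ 0 := hPf.root_nonpos hrf
    obtain ⟨f₁, hffac⟩ := dvd_iff_isRoot.mpr (isRoot_of_mem_roots hrf)
    obtain ⟨p₁, hpfac⟩ := dvd_iff_isRoot.mpr (isRoot_of_mem_roots hrp)
    have hf₁0 : f₁ ≠ 0 := by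
      intro h0; rw [h0, mul_zero] at hffac; exact hf0 hffac
    have hp₁0 : p₁ ≠ 0 := by
      intro h0; rw [h0, mul_zero] at hpfac; exact hp0 hpfac
    have hhfac : h = (X - C r) * (a * f₁ + b * p₁) := by
      rw [hrec, hffac, hpfac]; ring
    set h₁ := a * f₁ + b * p₁ with hh₁
    have hh₁0 : h₁ ≠ 0 := by
      intro h0; rw [h0, mul_zero] at hhfac; exact hh0 hhfac
    have hPf₁ : Pos f₁ := hPf.of_factor hffac hr0
    have hPp₁ : Pos p₁ := hPp.of_factor hpfac hr0
    have hPh₁ : Pos h₁ := hPh.of_factor hhfac hr0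
    have hRf₁ : RealRooted f₁ := (realRooted_factor_iff hf₁0 r).mp (hffac ▸ hRf)
    have hRp₁ : RealRooted p₁ := (realRooted_factor_iff hp₁0 r).mp (hpfac ▸ hRp)
    have hILpf₁ : ILc p₁ f₁ := ILc_unfactor hp₁0 hf₁0 r (by rw [← hpfac, ← hffac]; exact hILpf)
    have hdf₁ : f.natDegree = f₁.natDegree + 1 := hffac ▸ natDegree_factor hf₁0 r
    have hdh₁ : h.natDegree = h₁.natDegree + 1 := hhfac ▸ natDegree_factor hh₁0 r
    obtain ⟨hRh₁, hIf₁h₁⟩ := IH (n-1) (by omega) f₁ p₁ a b h₁ (by omega)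
      hPf₁ (Or.inr hPp₁) (Or.inr hPh₁) hRf₁ hRp₁
      (ILc_to_interlaces hRf₁ hRp₁ hILpf₁) rfl hb (by omega)
    constructor
    · rw [hhfac]
      exact (realRooted_factor_iff hh₁0 r).mpr hRh₁
    · refine ILc_to_interlaces (hhfac ▸ (realRooted_factor_iff hh₁0 r).mpr hRh₁) hRf ?_
      have := ILc_factor hf₁0 hh₁0 r
        (interlaces_to_ILc hIf₁h₁ hRh₁ hRf₁ hf₁0 hh₁0)
      rw [← hffac, ← hhfac] at this
      exact this
  -- main case : no common roots
  push_neg at hcom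
  have hnodup : f.roots.Nodup := by
    rw [Multiset.nodup_iff_count_le_one]
    intro r
    by_contra hc
    push_neg at hc
    have hmem : r ∈ f.roots := Multiset.count_pos.mp (by omega)
    exact hcom r hmem (common_root_of_multiple hILpf (by omega))
  -- sorted list of roots of f
  set l := f.roots.sort (· ≤ ·) with hl
  have hsortl : l.Pairwise (· ≤ ·) := sorted_sortedRoots f
  have hlenl : l.length = n := by rw [hl, length_sortedRoots, hRf, hn]
  have hmeml : ∀ {i : ℕ}, i < n → l.getD i 0 ∈ f.roots := by
    intro i hi
    have h1 : i < l.length := by omega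
    have h2 := getD_mem h1
    rw [hl] at h2
    rwa [Multiset.mem_sort] at h2
  have hρ0 : ∀ i, i < n → l.getD i 0 ≤ 0 := fun i hi => hPf.root_nonpos (hmeml hi)
  have hnodl : l.Nodup := by
    rw [hl, ← Multiset.coe_nodup, Multiset.sort_eq]
    exact hnodup
  set σ : ℕ → ℝ := fun i => if i < n then l.getD i 0 else 1 with hσ
  have hσval : ∀ i, i < n → σ i = l.getD i 0 := by
    intro i hi
    simp only [hσ]
    rw [if_pos hi]
  have hσ1 : ∀ i, ¬ (i < n) → σ i = 1 := by
    intro i hi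
    simp only [hσ]
    rw [if_neg hi]
  have hσlt : ∀ i, i < n → σ i < σ (i+1) := by
    intro i hi
    rcases Nat.lt_or_ge (i+1) n with h2 | h2
    · rw [hσval i hi, hσval (i+1) h2]
      exact sorted_nodup_strict hsortl hnodl (by omega) (by omega)
    · rw [hσval i hi, hσ1 (i+1) (by omega)]
      have := hρ0 i hi
      linarith
  have hlp : 0 < p.leadingCoeff := hPp.leadingCoeff_pos
  have hsign : ∀ i, i ≤ n → 0 ≤ (-1:ℝ)^(n-i) * h.eval (σ i) := by
    intro i hi
    rcases eq_or_lt_of_le hi with rfl | hilt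
    · rw [hσ1 i (by omega), Nat.sub_self, pow_zero, one_mul]
      exact (hPh 1 one_pos).le
    · set ρ := l.getD i 0 with hρ
      have hρf : ρ ∈ f.roots := hmeml hilt
      have hfev : f.eval ρ = 0 := isRoot_of_mem_roots hρf
      have hhev : h.eval ρ = b.eval ρ * p.eval ρ := by
        rw [hrec]
        simp [hfev]
      have hbneg : b.eval ρ ≤ 0 := hb ρ (hρ0 i hilt)
      have hρp : ρ ∉ p.roots := hcom ρ hρf
      have hes := eval_sign hRp hlp hρp
      set k := Multiset.countP (fun a => ρ < a) p.roots with hk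
      have hkc : cntLE p ρ + k = p.natDegree := by
        rw [cntLE, ← hRp]
        exact countP_not_le p.roots ρ
      obtain ⟨hfLE, hfLT⟩ := cnt_at_root hnodup
        (show i < (f.roots.sort (· ≤ ·)).length by rw [← hl]; omega)
      rw [← hl, ← hρ] at hfLE hfLT
      have hpcnt : cntLE p ρ = cntLT p ρ := by
        have hsp := cnt_split p ρ
        have hc0 : p.roots.count ρ = 0 := Multiset.count_eq_zero.mpr hρp
        omega
      have hni : n - i = k + 1 := by
        rcases hILpf with ⟨hdq, hc⟩ | ⟨hdq, hc⟩
        · obtain ⟨c1, c2, c3, c4⟩ := hc ρ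
          omega
        · obtain ⟨c1, c2, c3, c4⟩ := hc ρ
          omega
      rw [hσval i hilt, ← hρ, hhev, hni, pow_succ]
      have hbnn : 0 ≤ -(b.eval ρ) := neg_nonneg.mpr hbneg
      have heq : (-1:ℝ)^k * (-1) * (b.eval ρ * p.eval ρ)
          = (-(b.eval ρ)) * (p.eval ρ * (-1:ℝ)^k) := by ring
      rw [heq]
      exact mul_nonneg hbnn hes.le
  -- apply the root-placement lemma
  obtain ⟨γ, q, hlenγ, hsortγ, hfacγ, hboundsγ, hqev⟩ := lemB n hnpos h hh0 σ hσlt hsign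
  obtain ⟨hmonP, hdegP, hrootsP⟩ := listProd_facts γ
  have hP0 : ((γ.map fun r => X - C r).prod) ≠ 0 := hmonP.ne_zero
  have hq0 : q ≠ 0 := by
    intro h0
    rw [h0, mul_zero] at hfacγ
    exact hh0 hfacγ
  have hdq : h.natDegree = n + q.natDegree := by
    rw [hfacγ, natDegree_mul hP0 hq0, hdegP, hlenγ]
  have hlq : q.leadingCoeff = h.leadingCoeff := by
    rw [hfacγ, leadingCoeff_mul, hmonP.leadingCoeff, one_mul]
  have hlh : 0 < h.leadingCoeff := hPh.leadingCoeff_pos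
  have hrootsh : h.roots = ↑γ + q.roots := by
    rw [hfacγ, roots_mul (hfacγ ▸ hh0), hrootsP]
  have hbnd1 : ∀ i, i < n → l.getD i 0 ≤ γ.getD i 0 := by
    intro i hi
    have := (hboundsγ i hi).1
    rwa [hσval i hi] at this
  have hbnd2 : ∀ i, i + 1 < n → γ.getD i 0 ≤ l.getD (i+1) 0 := by
    intro i hi
    have := (hboundsγ i (by omega)).2
    rwa [hσval (i+1) hi] at this
  rw [hn] at hdeg
  rcases hdeg with hd | hd
  · -- degree of h equals n : the cofactor q is a nonzero constant
    have hq0d : q.natDegree = 0 := by omega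
    have hqC : q = C (q.coeff 0) := eq_C_of_natDegree_eq_zero hq0d
    have hrootsq : q.roots = 0 := by
      rw [hqC]
      exact roots_C _
    have hrootsh' : h.roots = ↑γ := by rw [hrootsh, hrootsq, add_zero]
    have hRh : RealRooted h := by
      rw [RealRooted, hrootsh', Multiset.coe_card, hlenγ, hd]
    have hsorteq : h.roots.sort (· ≤ ·) = γ := by
      apply List.Perm.eq_of_pairwise' (sorted_sortedRoots h) hsortγ
      rw [← Multiset.coe_eq_coe, Multiset.sort_eq, hrootsh']
    have hcond : ∀ i < h.natDegree,
        (f.roots.sort (· ≤ ·)).getD i 0 ≤ (h.roots.sort (· ≤ ·)).getD i 0 ∧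
        (i + 1 < h.natDegree →
          (h.roots.sort (· ≤ ·)).getD i 0 ≤ (f.roots.sort (· ≤ ·)).getD (i+1) 0) := by
      intro i hi
      rw [hsorteq, ← hl]
      have hin : i < n := by omega
      exact ⟨hbnd1 i hin, fun h2 => hbnd2 i (by omega)⟩
    exact ⟨hRh, Or.inr (Or.inr (Or.inr ⟨hRh, hRf, Or.inl ⟨by omega, hcond⟩⟩))⟩
  · -- degree of h equals n + 1 : the cofactor q is linear
    have hq1d : q.natDegree = 1 := by omega
    have hc1 : q.coeff 1 ≠ 0 := by
      have := leadingCoeff_ne_zero.mpr hq0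
      rwa [leadingCoeff, hq1d] at this
    have hlq1 : q.leadingCoeff = q.coeff 1 := by rw [leadingCoeff, hq1d]
    have hc1pos : 0 < q.coeff 1 := by
      rw [← hlq1, hlq]
      exact hlh
    set δ := -(q.coeff 0) / q.coeff 1 with hδ
    have hcd : q.coeff 1 * δ = -(q.coeff 0) := by
      rw [hδ]
      field_simp
    have hqform : q = C (q.coeff 1) * (X - C δ) := by
      have hq' : q = C (q.coeff 1) * X + C (q.coeff 0) :=
        eq_X_add_C_of_natDegree_le_one (le_of_eq hq1d)
      rw [mul_sub, ← C_mul, hcd, map_neg, sub_neg_eq_add, ← hq']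
    have hrootsq : q.roots = {δ} := by
      rw [hqform, roots_C_mul _ hc1, roots_X_sub_C]
    have hrootsh' : h.roots = ↑(δ :: γ) := by
      rw [hrootsh, hrootsq, add_comm, Multiset.singleton_add, Multiset.cons_coe]
    have hRh : RealRooted h := by
      rw [RealRooted, hrootsh', Multiset.coe_card]
      simp only [List.length_cons, hlenγ]
      omega
    have hδσ0 : δ ≤ σ 0 := by
      have hqe := hqev
      rw [hqform] at hqe
      simp only [eval_mul, eval_sub, eval_X, eval_C] at hqe
      nlinarith
    have hsortδγ : (δ :: γ).Pairwise (· ≤ ·) := by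
      rw [List.pairwise_cons]
      refine ⟨?_, hsortγ⟩
      intro x hx
      obtain ⟨j, hj, rfl⟩ := List.mem_iff_getElem.mp hx
      have hjn : j < n := by omega
      have h1 : σ j ≤ γ.getD j 0 := (hboundsγ j hjn).1
      rw [← List.getD_eq_getElem _ _ hj]
      calc δ ≤ σ 0 := hδσ0
        _ ≤ σ j := sigma_le hσlt 0 j (by omega) (by omega)
        _ ≤ γ.getD j 0 := h1
    have hsorteq : h.roots.sort (· ≤ ·) = δ :: γ := by
      apply List.Perm.eq_of_pairwise' (sorted_sortedRoots h) hsortδγ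
      rw [← Multiset.coe_eq_coe, Multiset.sort_eq, hrootsh']
    have hcond : ∀ i < f.natDegree,
        (h.roots.sort (· ≤ ·)).getD i 0 ≤ (f.roots.sort (· ≤ ·)).getD i 0 ∧
        (f.roots.sort (· ≤ ·)).getD i 0 ≤ (h.roots.sort (· ≤ ·)).getD (i+1) 0 := by
      intro i hi
      rw [hsorteq, ← hl]
      have hin : i < n := by omega
      constructor
      · cases i with
        | zero =>
          rw [List.getD_cons_zero]
          calc δ ≤ σ 0 := hδσ0
            _ = l.getD 0 0 := hσval 0 (by omega)
        | succ j =>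
          rw [List.getD_cons_succ]
          exact hbnd2 j hin
      · rw [List.getD_cons_succ]
        exact hbnd1 i hin
    exact ⟨hRh, Or.inr (Or.inr (Or.inr ⟨hRh, hRf, Or.inr ⟨by omega, hcond⟩⟩))⟩


end Main

end LW

/-- Liu–Wang criterion: a sequence of nonnegative polynomials satisfying a suitable
three-term recurrence is a generalized Sturm sequence. -/
theorem stmt14 (F : ℕ → Polynomial ℝ)
    (hnonneg : ∀ i j, 0 ≤ (F i).coeff j)
    (h0 : RealRooted (F 0)) (h1 : RealRooted (F 1)) (h01 : Interlaces (F 0) (F 1))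
    (hdeg : ∀ i, (F (i + 1)).natDegree = (F i).natDegree ∨
      (F (i + 1)).natDegree = (F i).natDegree + 1)
    (A B : ℕ → Polynomial ℝ)
    (hrec : ∀ j, F (j + 2) = A j * F (j + 1) + B j * F j)
    (hB : ∀ j, ∀ x : ℝ, x ≤ 0 → (B j).eval x ≤ 0) :
    ∀ i, RealRooted (F i) ∧ Interlaces (F i) (F (i + 1)) := by
  have key : ∀ i, RealRooted (F i) ∧ RealRooted (F (i+1)) ∧ Interlaces (F i) (F (i+1)) := by
    intro i
    induction i with
    | zero => exact ⟨h0, h1, h01⟩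
    | succ i IH =>
      obtain ⟨hRi, hRi1, hIl⟩ := IH
      rcases eq_or_ne (F (i+1)) 0 with hz | hnz
      · have hd2 : (F (i+2)).natDegree ≤ 1 := by
          have := hdeg (i+1)
          rw [hz, natDegree_zero] at this
          have h22 : F (i+1+1) = F (i+2) := rfl
          rw [h22] at this
          omega
        exact ⟨hRi1, LW.realRooted_of_natDegree_le_one hd2, Or.inl hz⟩
      · have hPf : LW.Pos (F (i+1)) := LW.pos_of_nonneg_coeff (hnonneg (i+1)) hnz
        have hPp : F i = 0 ∨ LW.Pos (F i) := by
          rcases eq_or_ne (F i) 0 with hz' | hnz'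
          · exact Or.inl hz'
          · exact Or.inr (LW.pos_of_nonneg_coeff (hnonneg i) hnz')
        have hPh : F (i+2) = 0 ∨ LW.Pos (F (i+2)) := by
          rcases eq_or_ne (F (i+2)) 0 with hz' | hnz'
          · exact Or.inl hz'
          · exact Or.inr (LW.pos_of_nonneg_coeff (hnonneg (i+2)) hnz')
        obtain ⟨hR2, hI2⟩ := LW.main' (F (i+1)).natDegree (F (i+1)) (F i) (A i) (B i)
          (F (i+2)) rfl hPf hPp hPh hRi1 hRi hIl (hrec i) (hB i) (hdeg (i+1))
        exact ⟨hRi1, hR2, hI2⟩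
  intro i
  exact ⟨(key i).1, (key i).2.2⟩
end
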